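/- arXiv:2207.05735 — 2 statements merged into one kernel-verified Lean document; each statement's English description precedes it below -/
import Mathlib

section
/- Let h be a prime divisor of q, let φ: ℤ_q^m → ℤ_h be a normalized array (φ(0) = 0) with expansion φ' of type z ≠ 0, and let E, K, L be the associated groups. The following are equivalent: (i) the cocycle μ_z·∂φ is symmetric and orthogonal, i.e., M_{μ_z·∂φ} is a symmetric Butson Hadamard matrix in BH(q^m, h); (ii) φ is a GPhA(q^m) of type z; (iii) {g + K ∈ E/K : φ'(g) = 0} is a non-splitting (q^m, h, q^m, q^m/h)-relative difference set in E/K with forbidden subgroup L/K. -/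
open scoped BigOperators Pointwise

noncomputable section

/-- `zeta k` is the complex `k`-th root of unity `exp(2π√-1/k)`. -/
def zeta (k : ℕ) : ℂ := Complex.exp (2 * Real.pi * Complex.I / k)

/-- Periodic autocorrelation of a map `f : A → ℤ_h` at shift `w`. -/
def AC {A : Type*} [AddCommGroup A] [Fintype A] (h : ℕ) (f : A → ZMod h) (w : A) : ℂ :=
  ∑ g : A, zeta h ^ (f g - f (g + w)).val

/-- The expansion `φ' : E → ℤ_h` of type `z` of an `h`-ary array `φ`:
`φ'(g) = φ(g mod s) + Σ_i ⌊g_i / s_i⌋ (mod h)`. -/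
def expand (m h : ℕ) (s z : Fin m → ℕ) (φ : (∀ i, ZMod (s i)) → ZMod h)
    (g : ∀ i, ZMod ((z i * (h - 1) + 1) * s i)) : ZMod h :=
  φ (fun i => ((g i).val : ZMod (s i))) + ((∑ i, (g i).val / s i : ℕ) : ZMod h)

/-- The set `L ⊆ E`. -/
def LSet (m h : ℕ) (s z : Fin m → ℕ) :
    Set (∀ i, ZMod ((z i * (h - 1) + 1) * s i)) :=
  {g | ∀ i, s i ∣ (g i).val ∧ (z i = 0 → (g i).val = 0)}

private theorem cast_val_mod {n t : ℕ} (hd : t ∣ n) (X : ℕ) :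
    ((X % n : ℕ) : ZMod t) = (X : ZMod t) := by
  conv_rhs => rw [← Nat.div_add_mod X n]
  push_cast
  rw [(ZMod.natCast_eq_zero_iff n t).2 hd]
  ring

/-- `L` as a subgroup of `E`. -/
def Lsub (m h : ℕ) (s z : Fin m → ℕ)
    [∀ i, NeZero ((z i * (h - 1) + 1) * s i)] :
    AddSubgroup (∀ i, ZMod ((z i * (h - 1) + 1) * s i)) where
  carrier := LSet m h s z
  zero_mem' := by
    intro i
    simp [ZMod.val_zero]
  add_mem' := by
    rintro a b ha hb i
    obtain ⟨ha1, ha2⟩ := ha i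
    obtain ⟨hb1, hb2⟩ := hb i
    have hval : ((a + b) i).val = ((a i).val + (b i).val) % ((z i * (h - 1) + 1) * s i) :=
      ZMod.val_add _ _
    constructor
    · rw [hval]
      exact (Nat.dvd_mod_iff (dvd_mul_left _ _)).2 (Nat.dvd_add ha1 hb1)
    · intro hzi
      rw [hval, ha2 hzi, hb2 hzi]
      simp
  neg_mem' := by
    rintro a ha i
    obtain ⟨ha1, ha2⟩ := ha i
    have hval : ((-a) i).val
        = if a i = 0 then 0 else (z i * (h - 1) + 1) * s i - (a i).val :=
      ZMod.neg_val _
    constructor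
    · rw [hval]
      split
      · exact dvd_zero _
      · exact Nat.dvd_sub (dvd_mul_left _ _) ha1
    · intro hzi
      rw [hval]
      have : a i = 0 := (ZMod.val_eq_zero _).1 (ha2 hzi)
      simp [this]

/-- `K = {g ∈ L : Σ_i g_i/s_i ≡ 0 (mod h)}` as a subgroup of `E`. -/
def Ksub (m h : ℕ) (s z : Fin m → ℕ)
    [∀ i, NeZero ((z i * (h - 1) + 1) * s i)]
    (hh : 2 ≤ h) (hs : ∀ i, 1 < s i) (hz : ∀ i, z i ≤ 1) :
    AddSubgroup (∀ i, ZMod ((z i * (h - 1) + 1) * s i)) where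
  carrier := {g | g ∈ LSet m h s z ∧ (h : ℕ) ∣ ∑ i, (g i).val / s i}
  zero_mem' := by
    refine ⟨(Lsub m h s z).zero_mem', ?_⟩
    simp [ZMod.val_zero]
  add_mem' := by
    rintro a b ⟨haL, haS⟩ ⟨hbL, hbS⟩
    refine ⟨(Lsub m h s z).add_mem' haL hbL, ?_⟩
    rw [← ZMod.natCast_eq_zero_iff] at haS hbS ⊢
    rw [Nat.cast_sum] at haS hbS ⊢
    have key : ∀ i, ((((a + b) i).val / s i : ℕ) : ZMod h)
        = (((a i).val / s i : ℕ) : ZMod h) + (((b i).val / s i : ℕ) : ZMod h) := by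
      intro i
      have hzi : z i = 0 ∨ z i = 1 := by have := hz i; omega
      have hval : ((a + b) i).val = ((a i).val + (b i).val) % ((z i * (h - 1) + 1) * s i) :=
        ZMod.val_add _ _
      rcases hzi with h0 | h1
      · have ha0 := (haL i).2 h0
        have hb0 := (hbL i).2 h0
        rw [hval, ha0, hb0]
        simp
      · have hc : z i * (h - 1) + 1 = h := by rw [h1]; omega
        obtain ⟨α, hα⟩ := (haL i).1
        obtain ⟨β, hβ⟩ := (hbL i).1
        have hspos : 0 < s i := by have := hs i; omega
        rw [hval, Nat.mod_mul_left_div_self, hα, hβ, ← Nat.mul_add,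
          Nat.mul_div_cancel_left _ hspos, Nat.mul_div_cancel_left _ hspos,
          Nat.mul_div_cancel_left _ hspos, hc, ZMod.natCast_mod, Nat.cast_add]
    rw [Finset.sum_congr rfl fun i _ => key i, Finset.sum_add_distrib, haS, hbS, add_zero]
  neg_mem' := by
    rintro a ⟨haL, haS⟩
    refine ⟨(Lsub m h s z).neg_mem' haL, ?_⟩
    rw [← ZMod.natCast_eq_zero_iff] at haS ⊢
    rw [Nat.cast_sum] at haS ⊢
    have key : ∀ i, ((((-a) i).val / s i : ℕ) : ZMod h)
        = -(((a i).val / s i : ℕ) : ZMod h) := by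
      intro i
      have hzi : z i = 0 ∨ z i = 1 := by have := hz i; omega
      have hval : ((-a) i).val
          = if a i = 0 then 0 else (z i * (h - 1) + 1) * s i - (a i).val :=
        ZMod.neg_val _
      by_cases h0 : a i = 0
      · rw [hval, if_pos h0, h0]
        simp [ZMod.val_zero]
      · rcases hzi with hz0 | hz1
        · exact absurd ((ZMod.val_eq_zero _).1 ((haL i).2 hz0)) h0
        · have hc : z i * (h - 1) + 1 = h := by rw [hz1]; omega
          obtain ⟨α, hα⟩ := (haL i).1
          have hspos : 0 < s i := by have := hs i; omega
          have hlt : (a i).val < (z i * (h - 1) + 1) * s i := ZMod.val_lt _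
          have hαle : α ≤ z i * (h - 1) + 1 := by
            rw [hα, mul_comm (z i * (h - 1) + 1) (s i)] at hlt
            have := Nat.lt_of_mul_lt_mul_left hlt
            omega
          have hsub : (z i * (h - 1) + 1) * s i - (a i).val
              = s i * ((z i * (h - 1) + 1) - α) := by
            rw [hα, mul_comm (z i * (h - 1) + 1) (s i)]
            exact (Nat.mul_sub _ _ _).symm
          rw [hval, if_neg h0, hsub, Nat.mul_div_cancel_left _ hspos, hα,
            Nat.mul_div_cancel_left _ hspos, Nat.cast_sub hαle, hc]
          simp
    rw [Finset.sum_congr rfl fun i _ => key i, Finset.sum_neg_distrib, haS, neg_zero]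

/-- The reduction-mod-`s` homomorphism `E →+ G`. -/
def resHom (m h : ℕ) (s z : Fin m → ℕ)
    [∀ i, NeZero ((z i * (h - 1) + 1) * s i)] :
    (∀ i, ZMod ((z i * (h - 1) + 1) * s i)) →+ (∀ i, ZMod (s i)) where
  toFun g i := ((g i).val : ZMod (s i))
  map_zero' := by
    funext i
    simp [ZMod.val_zero]
  map_add' a b := by
    funext i
    show (((a i + b i)).val : ZMod (s i)) = ((a i).val : ZMod (s i)) + ((b i).val : ZMod (s i))
    rw [ZMod.val_add, cast_val_mod (dvd_mul_left _ _), Nat.cast_add]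

/-- The homomorphism `β : E/K → G` induced by reduction mod `s`. -/
def betaHom (m h : ℕ) (s z : Fin m → ℕ)
    [∀ i, NeZero ((z i * (h - 1) + 1) * s i)]
    (hh : 2 ≤ h) (hs : ∀ i, 1 < s i) (hz : ∀ i, z i ≤ 1) :
    (∀ i, ZMod ((z i * (h - 1) + 1) * s i)) ⧸ Ksub m h s z hh hs hz →+ (∀ i, ZMod (s i)) :=
  QuotientAddGroup.lift (Ksub m h s z hh hs hz) (resHom m h s z) (by
    intro g hg
    funext i
    exact (ZMod.natCast_eq_zero_iff _ _).2 ((hg.1 i).1))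

/-- The transversal map `τ : G → E/K`, `τ(x) = x + K`
(embedding `x` with representatives `0 ≤ x_i < s_i`). -/
def tau (m h : ℕ) (s z : Fin m → ℕ)
    [∀ i, NeZero ((z i * (h - 1) + 1) * s i)]
    (hh : 2 ≤ h) (hs : ∀ i, 1 < s i) (hz : ∀ i, z i ≤ 1)
    (x : ∀ i, ZMod (s i)) :
    (∀ i, ZMod ((z i * (h - 1) + 1) * s i)) ⧸ Ksub m h s z hh hs hz :=
  QuotientAddGroup.mk (fun i => (((x i).val : ℕ) : ZMod ((z i * (h - 1) + 1) * s i)))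

/-- The injection `ι : ⟨ζ_h⟩ ≅ ℤ_h → E/K`, sending `ζ_h^j` to
`j • ((0,…,0,s_{i₀},0,…,0) + K)` for the fixed index `i₀` with `z i₀ = 1`. -/
def iota (m h : ℕ) (s z : Fin m → ℕ)
    [∀ i, NeZero ((z i * (h - 1) + 1) * s i)]
    (hh : 2 ≤ h) (hs : ∀ i, 1 < s i) (hz : ∀ i, z i ≤ 1)
    (i₀ : Fin m) (j : ZMod h) :
    (∀ i, ZMod ((z i * (h - 1) + 1) * s i)) ⧸ Ksub m h s z hh hs hz :=
  j.val • (QuotientAddGroup.mk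
    (Pi.single i₀ ((s i₀ : ℕ) : ZMod ((z i₀ * (h - 1) + 1) * s i₀))))

/-- `R` is a `(v,n,k,λ)`-relative difference set in the additive group `E`
relative to the (forbidden) subgroup `N`. -/
def IsAddRDS {E : Type*} [AddGroup E] (N : AddSubgroup E) (R : Set E)
    (v n k l : ℕ) : Prop :=
  N.index = v ∧ Nat.card N = n ∧ Nat.card R = k ∧
    (∀ r ∈ R, ∀ r' ∈ R, r - r' ∈ N → r = r') ∧
    ∀ x : E, x ∉ N → Nat.card {p : R × R // (p.1 : E) - (p.2 : E) = x} = l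

/-- A Butson Hadamard matrix in `BH(n,k)`. -/
def IsBH {ι : Type*} [Fintype ι] [DecidableEq ι] (n k : ℕ) (M : Matrix ι ι ℂ) : Prop :=
  Fintype.card ι = n ∧ (∀ a b, ∃ j : ℕ, M a b = zeta k ^ j) ∧
    M * M.conjTranspose = (n : ℂ) • (1 : Matrix ι ι ℂ)

end

/-- The cocycle `μ_z` in exponent form:
`μ_z(x,y) = ζ_h^{Σ_{i : z i = 1} ⌊(x_i+y_i)/s_i⌋}`. -/
def muexp (m h : ℕ) (s z : Fin m → ℕ) (x y : ∀ i, ZMod (s i)) : ZMod h :=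
  ((∑ i, if z i = 1 then ((x i).val + (y i).val) / s i else 0 : ℕ) : ZMod h)

/-- The cocycle `ψ = μ_z·∂φ` in exponent form, i.e.
`ψ(x,y) = μ_z(x,y)·ζ_h^{φ(x+y)-φ(x)-φ(y)}`. -/
def psiexp (m h : ℕ) (s z : Fin m → ℕ) (φ : (∀ i, ZMod (s i)) → ZMod h)
    (x y : ∀ i, ZMod (s i)) : ZMod h :=
  muexp m h s z x y + (φ (x + y) - φ x - φ y)

noncomputable section

def chi (h : ℕ) (u : ZMod h) : ℂ := zeta h ^ u.val

theorem zeta_pow_self (h : ℕ) (hh : h ≠ 0) : zeta h ^ h = 1 := by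
  rw [zeta, ← Complex.exp_nat_mul]
  rw [show (h : ℂ) * (2 * Real.pi * Complex.I / h) = 2 * Real.pi * Complex.I by
    rw [mul_div_assoc', mul_comm, mul_div_assoc]
    rw [div_self (by exact_mod_cast hh : (h:ℂ) ≠ 0)]; ring]
  exact Complex.exp_two_pi_mul_I

theorem zeta_pow_mod (h : ℕ) (hh : h ≠ 0) (n : ℕ) : zeta h ^ (n % h) = zeta h ^ n := by
  conv_rhs => rw [← Nat.div_add_mod n h, pow_add, pow_mul, zeta_pow_self h hh, one_pow, one_mul]

theorem chi_add {h : ℕ} [NeZero h] (u v : ZMod h) : chi h (u + v) = chi h u * chi h v := by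
  rw [chi, chi, chi, ZMod.val_add, zeta_pow_mod h (NeZero.ne h), pow_add]

theorem chi_zero {h : ℕ} [NeZero h] : chi h 0 = 1 := by simp [chi, ZMod.val_zero]

theorem chi_natCast {h : ℕ} [NeZero h] (n : ℕ) : chi h (n : ZMod h) = zeta h ^ n := by
  rw [chi, ZMod.val_natCast, zeta_pow_mod h (NeZero.ne h)]

theorem zeta_ne_zero (h : ℕ) : zeta h ≠ 0 := Complex.exp_ne_zero _

theorem chi_ne_zero {h : ℕ} (u : ZMod h) : chi h u ≠ 0 := pow_ne_zero _ (zeta_ne_zero h)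

theorem chi_neg {h : ℕ} [NeZero h] (u : ZMod h) : chi h (-u) = (chi h u)⁻¹ := by
  have : chi h (-u) * chi h u = 1 := by rw [← chi_add]; simp [chi_zero]
  field_simp [chi_ne_zero] at this ⊢
  linear_combination this

theorem conj_zeta (h : ℕ) (hh : h ≠ 0) : (starRingEnd ℂ) (zeta h) = (zeta h)⁻¹ := by
  have habs : ‖zeta h‖ = 1 := by
    rw [zeta, show 2 * Real.pi * Complex.I / h = ((2 * Real.pi / h : ℝ) : ℂ) * Complex.I by
      push_cast; ring]
    exact Complex.norm_exp_ofReal_mul_I _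
  have h2 := Complex.mul_conj (zeta h)
  rw [Complex.normSq_eq_norm_sq, habs] at h2
  refine eq_inv_of_mul_eq_one_left ?_
  rw [mul_comm]
  simpa using h2

theorem conj_chi {h : ℕ} [NeZero h] (u : ZMod h) : (starRingEnd ℂ) (chi h u) = chi h (-u) := by
  rw [chi, map_pow, conj_zeta h (NeZero.ne h), chi_neg, chi, inv_pow]

theorem sum_chi {h : ℕ} [NeZero h] (hh : 1 < h) : ∑ u : ZMod h, chi h u = 0 := by
  have hprim := Complex.isPrimitiveRoot_exp h (by omega)
  have hgeom := hprim.geom_sum_eq_zero hh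
  rw [← hgeom]
  refine Finset.sum_nbij' (i := fun u => u.val) (j := fun j => (j : ZMod h)) ?_ ?_ ?_ ?_ ?_
  · intro u _; exact Finset.mem_range.2 (ZMod.val_lt u)
  · intro j _; exact Finset.mem_univ _
  · intro u _; simp [ZMod.natCast_val, ZMod.cast_id]
  · intro j hj; exact ZMod.val_cast_of_lt (Finset.mem_range.1 hj)
  · intro u _; rfl

theorem sum_zmod_eq_range {h : ℕ} [NeZero h] (f : ZMod h → ℂ) :
    ∑ u : ZMod h, f u = ∑ j ∈ Finset.range h, f (j : ZMod h) := by
  refine Finset.sum_nbij' (i := fun u => u.val) (j := fun j => (j : ZMod h)) ?_ ?_ ?_ ?_ ?_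
  · intro u _; exact Finset.mem_range.2 (ZMod.val_lt u)
  · intro j _; exact Finset.mem_univ _
  · intro u _; simp [ZMod.natCast_val, ZMod.cast_id]
  · intro j hj; exact ZMod.val_cast_of_lt (Finset.mem_range.1 hj)
  · intro u _; simp [ZMod.natCast_val, ZMod.cast_id]

open Polynomial in
theorem sum_chi_eq_zero_iff {h : ℕ} [NeZero h] (hp : h.Prime) (c : ZMod h → ℕ) :
    ∑ u : ZMod h, (c u : ℂ) * chi h u = 0 ↔ ∀ u, c u = c 0 := by
  haveI : Fact h.Prime := ⟨hp⟩
  have h1 : 1 < h := hp.one_lt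
  constructor
  · intro hsum
    have hprim : IsPrimitiveRoot (zeta h) h := Complex.isPrimitiveRoot_exp h (by omega)
    set P : ℚ[X] := ∑ j ∈ Finset.range h, C ((c (j : ZMod h) : ℚ) - (c 0 : ℚ)) * X ^ j with hP
    have hcoeff : ∀ k, k < h → P.coeff k = (c (k : ZMod h) : ℚ) - (c 0 : ℚ) := by
      intro k hk
      rw [hP, finset_sum_coeff]
      rw [Finset.sum_eq_single k]
      · rw [coeff_C_mul, coeff_X_pow, if_pos rfl, mul_one]
      · intro j _ hjk; rw [coeff_C_mul, coeff_X_pow, if_neg (fun hh => hjk hh.symm), mul_zero]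
      · intro hk'; exact absurd (Finset.mem_range.2 hk) hk'
    have haeval : Polynomial.aeval (zeta h) P = 0 := by
      rw [hP]
      rw [map_sum]
      have : ∀ j ∈ Finset.range h, Polynomial.aeval (zeta h) (C ((c (j : ZMod h) : ℚ) - (c 0 : ℚ)) * X ^ j)
          = ((c (j : ZMod h) : ℂ) - (c 0 : ℂ)) * zeta h ^ j := by
        intro j _
        simp [Rat.cast_sub]
      rw [Finset.sum_congr rfl this]
      have e1 : ∑ j ∈ Finset.range h, ((c (j : ZMod h) : ℂ) - (c 0 : ℂ)) * zeta h ^ j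
          = (∑ j ∈ Finset.range h, (c (j : ZMod h) : ℂ) * zeta h ^ j)
            - (c 0 : ℂ) * ∑ j ∈ Finset.range h, zeta h ^ j := by
        rw [Finset.mul_sum, ← Finset.sum_sub_distrib]
        exact Finset.sum_congr rfl fun j _ => by ring
      rw [e1, hprim.geom_sum_eq_zero h1, mul_zero, sub_zero]
      rw [← hsum, sum_zmod_eq_range]
      exact (Finset.sum_congr rfl fun j _ => by rw [chi_natCast]).symm
    have hdvd : minpoly ℚ (zeta h) ∣ P := minpoly.dvd ℚ (zeta h) haeval
    rw [← Polynomial.cyclotomic_eq_minpoly_rat hprim (by omega)] at hdvd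
    have hdegcy : (cyclotomic h ℚ).natDegree = h - 1 := by
      rw [natDegree_cyclotomic, Nat.totient_prime hp]
    have hPzero : P = 0 := by
      by_contra hPne
      obtain ⟨Q, hQ⟩ := hdvd
      have hQne : Q ≠ 0 := fun hq => hPne (by rw [hQ, hq, mul_zero])
      have hdegP : P.natDegree ≤ h - 1 := by
        rw [hP]
        refine natDegree_sum_le_of_forall_le _ _ ?_
        intro j hj
        refine (natDegree_C_mul_le _ _).trans ?_
        rw [natDegree_X_pow]
        have := Finset.mem_range.1 hj
        omega
      have hdegQ : Q.natDegree = 0 := by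
        have := natDegree_mul (cyclotomic_ne_zero h ℚ) hQne
        rw [← hQ, hdegcy] at this
        omega
      obtain ⟨r, hr⟩ := natDegree_eq_zero.1 hdegQ
      have hc0 : P.coeff 0 = 0 := by
        rw [hcoeff 0 (by omega)]
        simp
      rw [hQ, ← hr, coeff_mul_C] at hc0
      have hcy0 : (cyclotomic h ℚ).coeff 0 = 1 := by
        rw [cyclotomic_prime ℚ h, finset_sum_coeff]
        rw [Finset.sum_eq_single 0]
        · simp
        · intro j _ hj; rw [coeff_X_pow, if_neg (fun hh => hj hh.symm)]
        · intro hk'; exact absurd (Finset.mem_range.2 (by omega)) hk'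
      rw [hcy0, one_mul] at hc0
      exact hPne (by rw [hQ, ← hr, hc0, map_zero, mul_zero])
    intro u
    have hco := hcoeff u.val (ZMod.val_lt u)
    rw [hPzero, coeff_zero] at hco
    have hval : ((c ((u.val : ℕ) : ZMod h) : ℚ)) = (c 0 : ℚ) := by linarith [hco.symm]
    have h2 : (((u.val : ℕ) : ZMod h)) = u := by simp [ZMod.natCast_val, ZMod.cast_id]
    rw [h2] at hval
    exact_mod_cast hval
  · intro hc
    calc ∑ u : ZMod h, (c u : ℂ) * chi h u = (c 0 : ℂ) * ∑ u : ZMod h, chi h u := by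
          rw [Finset.mul_sum]; exact Finset.sum_congr rfl fun u _ => by rw [hc u]
      _ = 0 := by rw [sum_chi h1, mul_zero]

theorem nat_div_add (A C q : ℕ) (hq : 0 < q) : A / q + (A % q + C) / q = (A + C) / q := by
  conv_rhs => rw [← Nat.div_add_mod A q]
  rw [add_assoc, Nat.mul_add_div hq]

theorem nat_add_div_split (A B q : ℕ) (hq : 0 < q) :
    (A + B) / q = A / q + B / q + (A % q + B % q) / q := by
  rw [← nat_div_add A B q hq]
  rw [show A % q + B = B + A % q by ring, ← nat_div_add B (A % q) q hq,
    Nat.add_comm (B % q) (A % q)]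
  ring

theorem nat_mod_mul_div_modeq (X q h : ℕ) (hq : 0 < q) :
    (X % (h * q)) / q ≡ X / q [MOD h] := by
  conv_rhs => rw [← Nat.div_add_mod X (h * q)]
  rw [show h * q * (X / (h * q)) + X % (h * q) = q * (h * (X / (h * q))) + X % (h * q) by ring]
  rw [Nat.mul_add_div hq]
  have : (h * (X / (h * q)) + X % (h * q) / q) ≡ 0 + X % (h * q) / q [MOD h] :=
    Nat.ModEq.add_right _ (Nat.modEq_zero_iff_dvd.2 ⟨_, rfl⟩)
  simpa using this.symm

theorem nat_cocycle (X Y C q : ℕ) (hq : 0 < q) :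
    (X + Y) / q + ((X + Y) % q + C) / q = (Y + C) / q + (X + (Y + C) % q) / q := by
  rw [nat_div_add (X + Y) C q hq]
  rw [show X + (Y + C) % q = (Y + C) % q + X by ring, nat_div_add (Y + C) X q hq]
  rw [show Y + C + X = X + Y + C by ring]

end

set_option linter.unusedSectionVars false
set_option linter.unusedVariables false
noncomputable section StructPart

variable (m h : ℕ) (s z : Fin m → ℕ)
  [∀ i, NeZero ((z i * (h - 1) + 1) * s i)] [∀ i, NeZero (s i)]

/-- Exponent sum `Σ_i ⌊g_i / s_i⌋` as an element of `ZMod h`. -/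
def Uexp (g : ∀ i, ZMod ((z i * (h - 1) + 1) * s i)) : ZMod h :=
  ((∑ i, (g i).val / s i : ℕ) : ZMod h)

/-- The canonical lift `G → E` using representatives `0 ≤ x_i < s_i`. -/
def upE (x : ∀ i, ZMod (s i)) : ∀ i, ZMod ((z i * (h - 1) + 1) * s i) :=
  fun i => (((x i).val : ℕ) : ZMod ((z i * (h - 1) + 1) * s i))

theorem res_apply (g : ∀ i, ZMod ((z i * (h - 1) + 1) * s i)) :
    resHom m h s z g = fun i => (((g i).val : ℕ) : ZMod (s i)) := rfl

theorem expand_eq (φ : (∀ i, ZMod (s i)) → ZMod h) (g) :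
    expand m h s z φ g = φ (resHom m h s z g) + Uexp m h s z g := rfl

theorem s_le_M (i : Fin m) : s i ≤ (z i * (h - 1) + 1) * s i :=
  Nat.le_mul_of_pos_left _ (by omega)

theorem mem_Lsub_iff (g) : g ∈ Lsub m h s z ↔ resHom m h s z g = 0 := by
  constructor
  · intro hg
    funext i
    exact (ZMod.natCast_eq_zero_iff _ _).2 ((hg i).1)
  · intro hg
    intro i
    have h1 : s i ∣ (g i).val := (ZMod.natCast_eq_zero_iff _ _).1 (congrFun hg i)
    refine ⟨h1, fun hzi => ?_⟩
    have hlt : (g i).val < (z i * (h - 1) + 1) * s i := ZMod.val_lt _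
    have hM : (z i * (h - 1) + 1) * s i = s i := by rw [hzi]; ring
    have hlt' : (g i).val < s i := by omega
    exact Nat.eq_zero_of_dvd_of_lt h1 hlt'

theorem val_resHom (g) (i : Fin m) :
    ((resHom m h s z g) i).val = (g i).val % s i := ZMod.val_natCast _ _

/-- Per-component division identity in `ZMod h`. -/
theorem comp_div (hh : 2 ≤ h) (hz : ∀ i, z i ≤ 1)
    (g w : ∀ i, ZMod ((z i * (h - 1) + 1) * s i)) (i : Fin m) :
    ((((g + w) i).val / s i : ℕ) : ZMod h)
      = (((g i).val / s i : ℕ) : ZMod h) + (((w i).val / s i : ℕ) : ZMod h)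
        + ((if z i = 1 then ((g i).val % s i + (w i).val % s i) / s i else 0 : ℕ) : ZMod h) := by
  have hspos : 0 < s i := Nat.pos_of_ne_zero (NeZero.ne (s i))
  have hval : ((g + w) i).val = ((g i).val + (w i).val) % ((z i * (h - 1) + 1) * s i) :=
    ZMod.val_add _ _
  rcases Nat.le_one_iff_eq_zero_or_eq_one.1 (hz i) with h0 | h1
  · -- z i = 0 : all divisions are zero
    have hM : (z i * (h - 1) + 1) * s i = s i := by rw [h0]; ring
    have hg : (g i).val < s i := by have := ZMod.val_lt (g i); omega
    have hw : (w i).val < s i := by have := ZMod.val_lt (w i); omega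
    have hgw : ((g + w) i).val < s i := by have := ZMod.val_lt ((g + w) i); omega
    rw [if_neg (by omega), Nat.div_eq_of_lt hg, Nat.div_eq_of_lt hw, Nat.div_eq_of_lt hgw]
    simp
  · -- z i = 1
    have hM : (z i * (h - 1) + 1) * s i = h * s i := by
      rw [h1]
      have he : 1 * (h - 1) + 1 = h := by omega
      rw [he]
    rw [if_pos h1, hval]
    have hMrw : ((g i).val + (w i).val) % ((z i * (h - 1) + 1) * s i)
        = ((g i).val + (w i).val) % (h * s i) :=
      congrArg (fun n => ((g i).val + (w i).val) % n) hM
    have key : (((g i).val + (w i).val) % ((z i * (h - 1) + 1) * s i)) / s i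
        ≡ (g i).val / s i + (w i).val / s i + ((g i).val % s i + (w i).val % s i) / s i
          [MOD h] := by
      rw [hMrw]
      calc (((g i).val + (w i).val) % (h * s i)) / s i
          ≡ ((g i).val + (w i).val) / s i [MOD h] := nat_mod_mul_div_modeq _ _ _ hspos
        _ = _ := nat_add_div_split _ _ _ hspos
    have := (ZMod.natCast_eq_natCast_iff _ _ _).2 key
    rw [this]
    push_cast
    ring

theorem Uexp_add_eq (hh : 2 ≤ h) (hz : ∀ i, z i ≤ 1)
    (g w : ∀ i, ZMod ((z i * (h - 1) + 1) * s i)) :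
    Uexp m h s z (g + w) = Uexp m h s z g + Uexp m h s z w
      + muexp m h s z (resHom m h s z g) (resHom m h s z w) := by
  rw [Uexp, Uexp, Uexp, muexp]
  rw [Nat.cast_sum, Nat.cast_sum, Nat.cast_sum, Nat.cast_sum]
  rw [← Finset.sum_add_distrib, ← Finset.sum_add_distrib]
  refine Finset.sum_congr rfl fun i _ => ?_
  rw [comp_div m h s z hh hz g w i]
  congr 2
  rw [val_resHom, val_resHom]

theorem expand_sub_expand (hh : 2 ≤ h) (hz : ∀ i, z i ≤ 1)
    (φ : (∀ i, ZMod (s i)) → ZMod h) (g w) :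
    expand m h s z φ g - expand m h s z φ (g + w)
      = φ (resHom m h s z g) - φ (resHom m h s z g + resHom m h s z w)
        - muexp m h s z (resHom m h s z g) (resHom m h s z w) - Uexp m h s z w := by
  rw [expand_eq, expand_eq, map_add, Uexp_add_eq m h s z hh hz]
  ring

theorem res_upE (x : ∀ i, ZMod (s i)) : resHom m h s z (upE m h s z x) = x := by
  funext i
  show (((upE m h s z x i).val : ℕ) : ZMod (s i)) = x i
  rw [upE, ZMod.val_natCast, Nat.mod_eq_of_lt (lt_of_lt_of_le (ZMod.val_lt _) (s_le_M m h s z i))]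
  simp [ZMod.natCast_val, ZMod.cast_id]

theorem Uexp_upE (x : ∀ i, ZMod (s i)) : Uexp m h s z (upE m h s z x) = 0 := by
  rw [Uexp]
  have : ∀ i ∈ Finset.univ, (upE m h s z x i).val / s i = 0 := by
    intro i _
    rw [upE, ZMod.val_natCast,
      Nat.mod_eq_of_lt (lt_of_lt_of_le (ZMod.val_lt _) (s_le_M m h s z i))]
    exact Nat.div_eq_of_lt (ZMod.val_lt _)
  rw [Finset.sum_congr rfl this]
  simp

theorem expand_upE (φ : (∀ i, ZMod (s i)) → ZMod h) (x) :
    expand m h s z φ (upE m h s z x) = φ x := by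
  rw [expand_eq, res_upE, Uexp_upE, add_zero]

theorem mem_Ksub_iff [NeZero h] (hh : 2 ≤ h) (hs : ∀ i, 1 < s i) (hz : ∀ i, z i ≤ 1) (g) :
    g ∈ Ksub m h s z hh hs hz ↔ g ∈ Lsub m h s z ∧ Uexp m h s z g = 0 := by
  have : g ∈ Ksub m h s z hh hs hz ↔ g ∈ LSet m h s z ∧ (h : ℕ) ∣ ∑ i, (g i).val / s i :=
    Iff.rfl
  rw [this, Uexp]
  have h2 : g ∈ Lsub m h s z ↔ g ∈ LSet m h s z := Iff.rfl
  rw [h2, ZMod.natCast_eq_zero_iff]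

theorem muexp_zero_right (x : ∀ i, ZMod (s i)) : muexp m h s z x 0 = 0 := by
  rw [muexp]
  have : ∀ i ∈ Finset.univ, (if z i = 1 then ((x i).val + ((0 : ∀ i, ZMod (s i)) i).val) / s i else 0) = 0 := by
    intro i _
    split
    · simp only [Pi.zero_apply, ZMod.val_zero, add_zero]
      exact Nat.div_eq_of_lt (ZMod.val_lt _)
    · rfl
  rw [Finset.sum_congr rfl this]
  simp

theorem muexp_comm (x y : ∀ i, ZMod (s i)) : muexp m h s z x y = muexp m h s z y x := by
  rw [muexp, muexp]
  have hsum : (∑ i, if z i = 1 then ((x i).val + (y i).val) / s i else 0)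
      = ∑ i, if z i = 1 then ((y i).val + (x i).val) / s i else 0 :=
    Finset.sum_congr rfl fun i _ => by rw [Nat.add_comm ((x i).val)]
  rw [hsum]

theorem expand_add_mem_L (hh : 2 ≤ h) (hz : ∀ i, z i ≤ 1)
    (φ : (∀ i, ZMod (s i)) → ZMod h) (g l) (hl : l ∈ Lsub m h s z) :
    expand m h s z φ (g + l) = expand m h s z φ g + Uexp m h s z l := by
  have hres : resHom m h s z l = 0 := (mem_Lsub_iff m h s z l).1 hl
  have := expand_sub_expand m h s z hh hz φ g l
  rw [hres, add_zero, muexp_zero_right m h s z] at this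
  linear_combination -this

theorem Uexp_add_mem (hh : 2 ≤ h) (hz : ∀ i, z i ≤ 1) (g l) (hl : l ∈ Lsub m h s z) :
    Uexp m h s z (g + l) = Uexp m h s z g + Uexp m h s z l := by
  have h1 := expand_add_mem_L m h s z hh hz (fun _ => 0) g l hl
  rw [expand_eq, expand_eq, zero_add, zero_add] at h1
  exact h1

theorem Uexp_sub_mem (hh : 2 ≤ h) (hz : ∀ i, z i ≤ 1) (g l) (hl : l ∈ Lsub m h s z) :
    Uexp m h s z (g - l) = Uexp m h s z g - Uexp m h s z l := by
  have := Uexp_add_mem m h s z hh hz (g - l) l hl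
  rw [sub_add_cancel] at this
  linear_combination -this

theorem Uexp_nsmul_mem (hh : 2 ≤ h) (hz : ∀ i, z i ≤ 1) (n : ℕ) (l) (hl : l ∈ Lsub m h s z) :
    Uexp m h s z (n • l) = n • Uexp m h s z l := by
  induction n with
  | zero => simp [Uexp, ZMod.val_zero]
  | succ k ih =>
    rw [succ_nsmul, Uexp_add_mem m h s z hh hz _ l hl, ih, succ_nsmul]

/-- The distinguished element `q·e_{i₀}` of `E`. -/
def u0E (i₀ : Fin m) : ∀ i, ZMod ((z i * (h - 1) + 1) * s i) :=
  Pi.single i₀ ((s i₀ : ℕ) : ZMod ((z i₀ * (h - 1) + 1) * s i₀))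

theorem u0_smul_val (hh : 2 ≤ h) (i₀ : Fin m) (hi₀ : z i₀ = 1) (j : ℕ) (i : Fin m) :
    ((j • u0E m h s z i₀) i).val = if i = i₀ then (j % h) * s i₀ else 0 := by
  have hM : (z i₀ * (h - 1) + 1) * s i₀ = h * s i₀ := by
    rw [hi₀]
    have he : 1 * (h - 1) + 1 = h := by omega
    rw [he]
  by_cases hii : i = i₀
  · subst hii
    rw [if_pos rfl]
    have h1 : (j • u0E m h s z i) i = ((j * s i : ℕ) : ZMod ((z i * (h - 1) + 1) * s i)) := by
      rw [u0E, Pi.smul_apply, Pi.single_eq_same, nsmul_eq_mul, Nat.cast_mul]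
    rw [h1, ZMod.val_natCast]
    calc (j * s i) % ((z i * (h - 1) + 1) * s i) = (j * s i) % (h * s i) := by
          exact congrArg (fun n => (j * s i) % n) hM
      _ = (j % h) * s i := Nat.mul_mod_mul_right _ _ _
  · rw [if_neg hii]
    have h1 : (j • u0E m h s z i₀) i = 0 := by
      rw [u0E, Pi.smul_apply, Pi.single_eq_of_ne hii, smul_zero]
    rw [h1, ZMod.val_zero]

theorem u0_smul_mem_L (hh : 2 ≤ h) (i₀ : Fin m) (hi₀ : z i₀ = 1) (j : ℕ) :
    j • u0E m h s z i₀ ∈ Lsub m h s z := by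
  intro i
  rw [u0_smul_val m h s z hh i₀ hi₀]
  by_cases hii : i = i₀
  · subst hii
    rw [if_pos rfl]
    exact ⟨Dvd.intro_left _ rfl, fun hzi => by rw [hzi] at hi₀; exact absurd hi₀ (by omega)⟩
  · rw [if_neg hii]
    exact ⟨dvd_zero _, fun _ => rfl⟩

theorem Uexp_u0_smul (hh : 2 ≤ h) (i₀ : Fin m) (hi₀ : z i₀ = 1) (j : ℕ) :
    Uexp m h s z (j • u0E m h s z i₀) = (j : ZMod h) := by
  rw [Uexp]
  have hsum : (∑ i, ((j • u0E m h s z i₀) i).val / s i) = (j % h) := by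
    rw [Finset.sum_eq_single i₀]
    · rw [u0_smul_val m h s z hh i₀ hi₀ j i₀, if_pos rfl]
      exact Nat.mul_div_cancel _ (Nat.pos_of_ne_zero (NeZero.ne (s i₀)))
    · intro i _ hii
      rw [u0_smul_val m h s z hh i₀ hi₀ j i, if_neg hii]
      exact Nat.zero_div _
    · intro hmem; exact absurd (Finset.mem_univ _) hmem
  rw [hsum, ZMod.natCast_mod]

theorem res_u0_smul (hh : 2 ≤ h) (i₀ : Fin m) (hi₀ : z i₀ = 1) (j : ℕ) :
    resHom m h s z (j • u0E m h s z i₀) = 0 :=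
  (mem_Lsub_iff m h s z _).1 (u0_smul_mem_L m h s z hh i₀ hi₀ j)

/-- The canonical zero of `φ'` over the fiber of `x`. -/
def gxE (i₀ : Fin m) (φ : (∀ i, ZMod (s i)) → ZMod h) (x : ∀ i, ZMod (s i)) :
    ∀ i, ZMod ((z i * (h - 1) + 1) * s i) :=
  upE m h s z x + ((- φ x).val) • u0E m h s z i₀

theorem res_gxE (hh : 2 ≤ h) (i₀ : Fin m) (hi₀ : z i₀ = 1) (φ) (x) :
    resHom m h s z (gxE m h s z i₀ φ x) = x := by
  rw [gxE, map_add, res_upE, res_u0_smul m h s z hh i₀ hi₀, add_zero]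

theorem expand_gxE [NeZero h] (hh : 2 ≤ h) (hz : ∀ i, z i ≤ 1) (i₀ : Fin m) (hi₀ : z i₀ = 1)
    (φ) (x) : expand m h s z φ (gxE m h s z i₀ φ x) = 0 := by
  rw [gxE, expand_add_mem_L m h s z hh hz φ _ _ (u0_smul_mem_L m h s z hh i₀ hi₀ _),
    expand_upE, Uexp_u0_smul m h s z hh i₀ hi₀]
  simp [ZMod.natCast_val, ZMod.cast_id]

/-- Number of elements in a fiber of `res`. -/
def nLcard : ℕ :=
  (Finset.univ.filter
    (fun l : ∀ i, ZMod ((z i * (h - 1) + 1) * s i) => resHom m h s z l = 0)).card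

theorem nLcard_pos : 0 < nLcard m h s z := by
  rw [nLcard]
  refine Finset.card_pos.2 ⟨0, ?_⟩
  rw [Finset.mem_filter]
  exact ⟨Finset.mem_univ _, map_zero _⟩

theorem card_fiber (x : ∀ i, ZMod (s i)) :
    (Finset.univ.filter
      (fun g : ∀ i, ZMod ((z i * (h - 1) + 1) * s i) => resHom m h s z g = x)).card
    = nLcard m h s z := by
  rw [nLcard]
  refine Finset.card_nbij' (i := fun g => g - upE m h s z x) (j := fun l => l + upE m h s z x)
    ?_ ?_ ?_ ?_
  · intro g hg
    rw [Finset.mem_coe, Finset.mem_filter] at hg ⊢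
    refine ⟨Finset.mem_univ _, ?_⟩
    rw [map_sub, hg.2, res_upE, sub_self]
  · intro l hl
    rw [Finset.mem_coe, Finset.mem_filter] at hl ⊢
    refine ⟨Finset.mem_univ _, ?_⟩
    rw [map_add, hl.2, res_upE, zero_add]
  · intro g _; show g - upE m h s z x + upE m h s z x = g; rw [sub_add_cancel]
  · intro l _; show l + upE m h s z x - upE m h s z x = l; rw [add_sub_cancel_right]

/-- The central character sum. -/
def Qsum (φ : (∀ i, ZMod (s i)) → ZMod h) (y : ∀ i, ZMod (s i)) : ℂ :=
  ∑ x : ∀ i, ZMod (s i), chi h (φ x - φ (x + y) - muexp m h s z x y)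

theorem AC_eq [NeZero h] (hh : 2 ≤ h) (hz : ∀ i, z i ≤ 1)
    (φ : (∀ i, ZMod (s i)) → ZMod h) (w) :
    AC h (expand m h s z φ) w
      = (nLcard m h s z : ℂ) * chi h (- Uexp m h s z w)
          * Qsum m h s z φ (resHom m h s z w) := by
  rw [AC]
  have step1 : ∀ g : ∀ i, ZMod ((z i * (h - 1) + 1) * s i),
      (zeta h ^ (expand m h s z φ g - expand m h s z φ (g + w)).val : ℂ)
      = chi h (φ (resHom m h s z g) - φ (resHom m h s z g + resHom m h s z w)
          - muexp m h s z (resHom m h s z g) (resHom m h s z w))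
        * chi h (- Uexp m h s z w) := by
    intro g
    have : (zeta h ^ (expand m h s z φ g - expand m h s z φ (g + w)).val : ℂ)
        = chi h (expand m h s z φ g - expand m h s z φ (g + w)) := rfl
    rw [this, expand_sub_expand m h s z hh hz φ g w, sub_eq_add_neg _ (Uexp m h s z w),
      chi_add]
  rw [Finset.sum_congr rfl fun g _ => step1 g, ← Finset.sum_mul]
  have step2 : (∑ g : ∀ i, ZMod ((z i * (h - 1) + 1) * s i),
      chi h (φ (resHom m h s z g) - φ (resHom m h s z g + resHom m h s z w)
        - muexp m h s z (resHom m h s z g) (resHom m h s z w)))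
      = (nLcard m h s z : ℂ) * Qsum m h s z φ (resHom m h s z w) := by
    rw [← Finset.sum_fiberwise Finset.univ (fun g => resHom m h s z g)
      (fun g => chi h (φ (resHom m h s z g) - φ (resHom m h s z g + resHom m h s z w)
        - muexp m h s z (resHom m h s z g) (resHom m h s z w)))]
    rw [Qsum, Finset.mul_sum]
    refine Finset.sum_congr rfl fun x _ => ?_
    have hinner : ∀ g ∈ Finset.univ.filter
        (fun g : ∀ i, ZMod ((z i * (h - 1) + 1) * s i) => resHom m h s z g = x),
        chi h (φ (resHom m h s z g) - φ (resHom m h s z g + resHom m h s z w)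
          - muexp m h s z (resHom m h s z g) (resHom m h s z w))
        = chi h (φ x - φ (x + resHom m h s z w) - muexp m h s z x (resHom m h s z w)) := by
      intro g hg
      rw [(Finset.mem_filter.1 hg).2]
    rw [Finset.sum_congr rfl hinner, Finset.sum_const, card_fiber, nsmul_eq_mul]
  rw [step2]
  ring

theorem not_LSet_iff (g) : g ∉ LSet m h s z ↔ resHom m h s z g ≠ 0 :=
  not_congr (mem_Lsub_iff m h s z g)

theorem AC_zero_iff [NeZero h] (hh : 2 ≤ h) (hz : ∀ i, z i ≤ 1)
    (φ : (∀ i, ZMod (s i)) → ZMod h) (w) :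
    AC h (expand m h s z φ) w = 0 ↔ Qsum m h s z φ (resHom m h s z w) = 0 := by
  rw [AC_eq m h s z hh hz φ w]
  constructor
  · intro h0
    rcases mul_eq_zero.1 h0 with h1 | h1
    · rcases mul_eq_zero.1 h1 with h2 | h2
      · exact absurd h2 (Nat.cast_ne_zero.2 (Nat.pos_iff_ne_zero.1 (nLcard_pos m h s z)))
      · exact absurd h2 (chi_ne_zero _)
    · exact h1
  · intro h0
    rw [h0, mul_zero]

theorem GPhA_iff_Qsum [NeZero h] (hh : 2 ≤ h) (hz : ∀ i, z i ≤ 1)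
    (φ : (∀ i, ZMod (s i)) → ZMod h) :
    (∀ g, g ∉ LSet m h s z → AC h (expand m h s z φ) g = 0)
      ↔ ∀ y : ∀ i, ZMod (s i), y ≠ 0 → Qsum m h s z φ y = 0 := by
  constructor
  · intro hAC y hy
    have hres : resHom m h s z (upE m h s z y) = y := res_upE m h s z y
    have h1 : upE m h s z y ∉ LSet m h s z := by
      rw [not_LSet_iff, hres]; exact hy
    have := hAC _ h1
    rw [AC_zero_iff m h s z hh hz φ _, hres] at this
    exact this
  · intro hQ g hg
    rw [AC_zero_iff m h s z hh hz φ g]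
    exact hQ _ ((not_LSet_iff m h s z g).1 hg)

theorem card_G (q : ℕ) (hsq : ∀ i, s i = q) :
    Fintype.card (∀ i, ZMod (s i)) = q ^ m := by
  rw [Fintype.card_pi]
  have : ∀ i : Fin m, Fintype.card (ZMod (s i)) = q := fun i => by
    rw [ZMod.card (s i), hsq i]
  rw [Finset.prod_congr rfl fun i _ => this i, Finset.prod_const, Finset.card_univ,
    Fintype.card_fin]

theorem muexp_cocycle (hz : ∀ i, z i ≤ 1) (d b c : ∀ i, ZMod (s i)) :
    muexp m h s z d b + muexp m h s z (d + b) c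
      = muexp m h s z b c + muexp m h s z d (b + c) := by
  rw [muexp, muexp, muexp, muexp, ← Nat.cast_add, ← Nat.cast_add,
    ← Finset.sum_add_distrib, ← Finset.sum_add_distrib]
  congr 1
  refine Finset.sum_congr rfl fun i _ => ?_
  by_cases hzi : z i = 1
  · rw [if_pos hzi, if_pos hzi, if_pos hzi, if_pos hzi]
    have hspos : 0 < s i := Nat.pos_of_ne_zero (NeZero.ne (s i))
    have hdb : ((d + b) i).val = ((d i).val + (b i).val) % s i := ZMod.val_add _ _
    have hbc : ((b + c) i).val = ((b i).val + (c i).val) % s i := ZMod.val_add _ _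
    rw [hdb, hbc]
    exact nat_cocycle _ _ _ _ hspos
  · rw [if_neg hzi, if_neg hzi, if_neg hzi, if_neg hzi]

theorem psiexp_comm (φ : (∀ i, ZMod (s i)) → ZMod h) (x y) :
    psiexp m h s z φ x y = psiexp m h s z φ y x := by
  rw [psiexp, psiexp, muexp_comm, add_comm x y]
  ring

/-- Row character sums of the cocyclic matrix. -/
def Tsum (φ : (∀ i, ZMod (s i)) → ZMod h) (d : ∀ i, ZMod (s i)) : ℂ :=
  ∑ x : ∀ i, ZMod (s i), chi h (psiexp m h s z φ d x)

theorem Qsum_eq_conj [NeZero h] (φ : (∀ i, ZMod (s i)) → ZMod h) (y) :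
    Qsum m h s z φ y = (starRingEnd ℂ) (chi h (φ y) * Tsum m h s z φ y) := by
  rw [map_mul, Tsum, map_sum, Qsum, Finset.mul_sum]
  refine Finset.sum_congr rfl fun x _ => ?_
  rw [conj_chi, conj_chi, ← chi_add]
  congr 1
  rw [psiexp, muexp_comm m h s z y x, add_comm y x]
  ring

theorem Qsum_zero_iff_Tsum [NeZero h] (φ : (∀ i, ZMod (s i)) → ZMod h) (y) :
    Qsum m h s z φ y = 0 ↔ Tsum m h s z φ y = 0 := by
  rw [Qsum_eq_conj, map_eq_zero_iff _ (starRingEnd ℂ).injective, mul_eq_zero]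
  constructor
  · rintro (hc | ht)
    · exact absurd hc (chi_ne_zero _)
    · exact ht
  · exact Or.inr

theorem psi_row_diff (hz : ∀ i, z i ≤ 1) (φ : (∀ i, ZMod (s i)) → ZMod h)
    (a b c : ∀ i, ZMod (s i)) :
    psiexp m h s z φ a c - psiexp m h s z φ b c
      = psiexp m h s z φ (a - b) (b + c)
        + (φ b + φ (a - b) - φ a - muexp m h s z (a - b) b) := by
  have hco := muexp_cocycle m h s z hz (a - b) b c
  rw [sub_add_cancel] at hco
  rw [psiexp, psiexp, psiexp]
  have hx : a - b + (b + c) = a + c := by abel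
  rw [hx]
  linear_combination hco

theorem muexp_zero_left (x : ∀ i, ZMod (s i)) : muexp m h s z 0 x = 0 := by
  rw [muexp_comm, muexp_zero_right]

theorem BH_iff [NeZero h] (q : ℕ) (hsq : ∀ i, s i = q) (hz : ∀ i, z i ≤ 1)
    (φ : (∀ i, ZMod (s i)) → ZMod h) (hφ0 : φ 0 = 0) :
    IsBH (q ^ m) h (Matrix.of fun a b : ∀ i, ZMod (s i) =>
        zeta h ^ (psiexp m h s z φ a b).val)
      ↔ ∀ d : ∀ i, ZMod (s i), d ≠ 0 → Tsum m h s z φ d = 0 := by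
  set M : Matrix (∀ i, ZMod (s i)) (∀ i, ZMod (s i)) ℂ :=
    Matrix.of fun a b => zeta h ^ (psiexp m h s z φ a b).val with hM
  have hMab : ∀ a b, M a b = chi h (psiexp m h s z φ a b) := fun a b => rfl
  have hentry : ∀ a b, (M * M.conjTranspose) a b
      = ∑ c : ∀ i, ZMod (s i), chi h (psiexp m h s z φ a c - psiexp m h s z φ b c) := by
    intro a b
    rw [Matrix.mul_apply]
    refine Finset.sum_congr rfl fun c _ => ?_
    rw [Matrix.conjTranspose_apply, hMab, hMab,
      show (star (chi h (psiexp m h s z φ b c)) : ℂ)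
        = (starRingEnd ℂ) (chi h (psiexp m h s z φ b c)) from rfl,
      conj_chi, sub_eq_add_neg, chi_add]
  constructor
  · rintro ⟨hcard, hent, hprod⟩ d hd
    have hone : ∀ c, psiexp m h s z φ 0 c = 0 := by
      intro c
      rw [psiexp, muexp_zero_left, zero_add, zero_add, hφ0, sub_zero]
      ring
    have h1 := congrFun (congrFun hprod d) 0
    rw [hentry d 0] at h1
    have h2 : ∀ c ∈ Finset.univ,
        chi h (psiexp m h s z φ d c - psiexp m h s z φ 0 c)
        = chi h (psiexp m h s z φ d c) := by
      intro c _
      rw [hone c, sub_zero]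
    rw [Finset.sum_congr rfl h2] at h1
    rw [Matrix.smul_apply, Matrix.one_apply_ne hd, smul_zero] at h1
    exact h1
  · intro hT
    refine ⟨card_G m s q hsq, fun a b => ⟨(psiexp m h s z φ a b).val, rfl⟩, ?_⟩
    ext a b
    rw [hentry a b]
    by_cases hab : a = b
    · subst hab
      have h2 : ∀ c ∈ Finset.univ,
          chi h (psiexp m h s z φ a c - psiexp m h s z φ a c) = 1 := by
        intro c _; rw [sub_self, chi_zero]
      rw [Finset.sum_congr rfl h2, Finset.sum_const, Finset.card_univ,
        card_G m s q hsq, nsmul_eq_mul, mul_one, Matrix.smul_apply,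
        Matrix.one_apply_eq, smul_eq_mul, mul_one]
    · have hd : a - b ≠ 0 := sub_ne_zero.2 hab
      have h2 : ∀ c ∈ Finset.univ,
          chi h (psiexp m h s z φ a c - psiexp m h s z φ b c)
          = chi h (psiexp m h s z φ (a - b) (b + c))
            * chi h (φ b + φ (a - b) - φ a - muexp m h s z (a - b) b) := by
        intro c _
        rw [psi_row_diff m h s z hz φ a b c, chi_add]
      rw [Finset.sum_congr rfl h2, ← Finset.sum_mul]
      have h3 : (∑ c : ∀ i, ZMod (s i), chi h (psiexp m h s z φ (a - b) (b + c)))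
          = Tsum m h s z φ (a - b) := by
        rw [Tsum]
        exact Fintype.sum_equiv (Equiv.addLeft b) _ _ (fun c => rfl)
      rw [h3, hT _ hd, zero_mul, Matrix.smul_apply, Matrix.one_apply_ne hab, smul_zero]

theorem part1_iff [NeZero h] (q : ℕ) (hsq : ∀ i, s i = q) (hh : 2 ≤ h) (hz : ∀ i, z i ≤ 1)
    (φ : (∀ i, ZMod (s i)) → ZMod h) (hφ0 : φ 0 = 0) :
    ((∀ a b, psiexp m h s z φ a b = psiexp m h s z φ b a)
        ∧ IsBH (q ^ m) h (Matrix.of fun a b : ∀ i, ZMod (s i) =>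
            zeta h ^ (psiexp m h s z φ a b).val))
      ↔ (∀ g, g ∉ LSet m h s z → AC h (expand m h s z φ) g = 0) := by
  rw [GPhA_iff_Qsum m h s z hh hz φ]
  constructor
  · rintro ⟨-, hBH⟩ y hy
    rw [Qsum_zero_iff_Tsum]
    exact (BH_iff m h s z q hsq hz φ hφ0).1 hBH y hy
  · intro hQ
    exact ⟨fun a b => psiexp_comm m h s z φ a b,
      (BH_iff m h s z q hsq hz φ hφ0).2
        (fun d hd => (Qsum_zero_iff_Tsum m h s z φ d).1 (hQ d hd))⟩

/-- Fiber counts of the difference function. -/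
def ncount (φ : (∀ i, ZMod (s i)) → ZMod h) (y : ∀ i, ZMod (s i)) (u : ZMod h) : ℕ :=
  (Finset.univ.filter
    (fun x : ∀ i, ZMod (s i) => φ x - φ (x + y) - muexp m h s z x y = u)).card

theorem Qsum_eq_sum_ncount [NeZero h] (φ : (∀ i, ZMod (s i)) → ZMod h) (y) :
    Qsum m h s z φ y = ∑ u : ZMod h, (ncount m h s z φ y u : ℂ) * chi h u := by
  rw [Qsum]
  rw [← Finset.sum_fiberwise Finset.univ
    (fun x => φ x - φ (x + y) - muexp m h s z x y)
    (fun x => chi h (φ x - φ (x + y) - muexp m h s z x y))]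
  refine Finset.sum_congr rfl fun u _ => ?_
  have hinner : ∀ x ∈ Finset.univ.filter
      (fun x : ∀ i, ZMod (s i) => φ x - φ (x + y) - muexp m h s z x y = u),
      chi h (φ x - φ (x + y) - muexp m h s z x y) = chi h u := by
    intro x hx
    rw [(Finset.mem_filter.1 hx).2]
  rw [Finset.sum_congr rfl hinner, Finset.sum_const, nsmul_eq_mul, ncount]

theorem Qsum_zero_iff_ncount [NeZero h] (hp : h.Prime) (φ : (∀ i, ZMod (s i)) → ZMod h) (y) :
    Qsum m h s z φ y = 0 ↔ ∀ u, ncount m h s z φ y u = ncount m h s z φ y 0 := by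
  rw [Qsum_eq_sum_ncount]
  exact sum_chi_eq_zero_iff hp (ncount m h s z φ y)

theorem sum_ncount [NeZero h] (q : ℕ) (hsq : ∀ i, s i = q)
    (φ : (∀ i, ZMod (s i)) → ZMod h) (y) :
    ∑ u : ZMod h, ncount m h s z φ y u = q ^ m := by
  have := Finset.card_eq_sum_card_fiberwise
    (f := fun x : ∀ i, ZMod (s i) => φ x - φ (x + y) - muexp m h s z x y)
    (s := Finset.univ) (t := Finset.univ) (fun x _ => Finset.mem_univ _)
  rw [Finset.card_univ, card_G m s q hsq] at this
  rw [this]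
  rfl

theorem ncount_const_iff [NeZero h] (hp : h.Prime) (q : ℕ) (hsq : ∀ i, s i = q)
    (φ : (∀ i, ZMod (s i)) → ZMod h) (y) :
    (∀ u, ncount m h s z φ y u = ncount m h s z φ y 0)
      ↔ ∀ u, ncount m h s z φ y u = q ^ m / h := by
  constructor
  · intro hc u
    have hsum := sum_ncount m h s z q hsq φ y
    rw [Finset.sum_congr rfl (fun u _ => hc u), Finset.sum_const, Finset.card_univ,
      ZMod.card h, smul_eq_mul] at hsum
    have h0 : ncount m h s z φ y 0 = q ^ m / h := by
      rw [← hsum, Nat.mul_div_cancel_left _ (Nat.pos_of_ne_zero hp.ne_zero)]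
    rw [hc u, h0]
  · intro hc u
    rw [hc u, hc 0]

section Quot
variable [NeZero h] (hh : 2 ≤ h) (hs : ∀ i, 1 < s i) (hz : ∀ i, z i ≤ 1)

theorem K_le_L : Ksub m h s z hh hs hz ≤ Lsub m h s z := fun g hg => hg.1

theorem mk_eq_mk_iff (a b : ∀ i, ZMod ((z i * (h - 1) + 1) * s i)) :
    (QuotientAddGroup.mk a : _ ⧸ Ksub m h s z hh hs hz) = QuotientAddGroup.mk b
      ↔ a - b ∈ Ksub m h s z hh hs hz :=
  QuotientAddGroup.eq_iff_sub_mem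

theorem mem_N_iff (w : ∀ i, ZMod ((z i * (h - 1) + 1) * s i)) :
    (QuotientAddGroup.mk w : _ ⧸ Ksub m h s z hh hs hz)
        ∈ (Lsub m h s z).map (QuotientAddGroup.mk' (Ksub m h s z hh hs hz))
      ↔ w ∈ Lsub m h s z := by
  constructor
  · rintro ⟨l, hl, hlw⟩
    rw [QuotientAddGroup.mk'_apply] at hlw
    have hsub : l - w ∈ Ksub m h s z hh hs hz := (mk_eq_mk_iff m h s z hh hs hz l w).1 hlw
    have : w = l - (l - w) := by abel
    rw [this]
    exact (Lsub m h s z).sub_mem hl (K_le_L m h s z hh hs hz hsub)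
  · intro hw
    exact ⟨w, hw, rfl⟩

theorem res_iff_mem_L (g) : g ∈ Lsub m h s z ↔ resHom m h s z g = 0 := mem_Lsub_iff m h s z g

/-- Characterisation of when two canonical zeros differ (mod `K`) by `w`. -/
theorem gx_sub_mem_K_iff (i₀ : Fin m) (hi₀ : z i₀ = 1)
    (φ : (∀ i, ZMod (s i)) → ZMod h) (x y : ∀ i, ZMod (s i))
    (w : ∀ i, ZMod ((z i * (h - 1) + 1) * s i)) :
    gxE m h s z i₀ φ x - gxE m h s z i₀ φ y - w ∈ Ksub m h s z hh hs hz
      ↔ (x = y + resHom m h s z w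
          ∧ φ y - φ (y + resHom m h s z w) - muexp m h s z y (resHom m h s z w)
              = Uexp m h s z w) := by
  set l := gxE m h s z i₀ φ x - gxE m h s z i₀ φ y - w with hl
  have hres_iff : l ∈ Lsub m h s z ↔ x = y + resHom m h s z w := by
    rw [mem_Lsub_iff, hl, map_sub, map_sub, res_gxE m h s z hh i₀ hi₀,
      res_gxE m h s z hh i₀ hi₀, sub_sub, sub_eq_zero]
  have hUcomp : l ∈ Lsub m h s z →
      Uexp m h s z l = φ y - φ (y + resHom m h s z w)
        - muexp m h s z y (resHom m h s z w) - Uexp m h s z w := by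
    intro hLmem
    have hsum : gxE m h s z i₀ φ y + w + l = gxE m h s z i₀ φ x := by rw [hl]; abel
    have h1 : expand m h s z φ (gxE m h s z i₀ φ y + w + l)
        = expand m h s z φ (gxE m h s z i₀ φ y + w) + Uexp m h s z l :=
      expand_add_mem_L m h s z hh hz φ _ l hLmem
    rw [hsum, expand_gxE m h s z hh hz i₀ hi₀] at h1
    have h2 := expand_sub_expand m h s z hh hz φ (gxE m h s z i₀ φ y) w
    rw [expand_gxE m h s z hh hz i₀ hi₀, res_gxE m h s z hh i₀ hi₀, zero_sub] at h2
    -- h2 : -expand (gxy + w) = φ y - φ (y + res w) - muexp y (res w) - Uexp w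
    linear_combination -h1 + h2
  rw [mem_Ksub_iff m h s z hh hs hz]
  constructor
  · rintro ⟨hL, hU⟩
    refine ⟨(hres_iff).1 hL, ?_⟩
    have := hUcomp hL
    rw [hU] at this
    linear_combination -this
  · rintro ⟨hx, hF⟩
    have hL : l ∈ Lsub m h s z := (hres_iff).2 hx
    refine ⟨hL, ?_⟩
    rw [hUcomp hL, hF]
    ring

theorem mk_gx_eq_iff (i₀ : Fin m) (hi₀ : z i₀ = 1)
    (φ : (∀ i, ZMod (s i)) → ZMod h) (x y : ∀ i, ZMod (s i)) :
    (QuotientAddGroup.mk (gxE m h s z i₀ φ x) : _ ⧸ Ksub m h s z hh hs hz)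
        = QuotientAddGroup.mk (gxE m h s z i₀ φ y) ↔ x = y := by
  rw [mk_eq_mk_iff]
  have h0 : gxE m h s z i₀ φ x - gxE m h s z i₀ φ y
      = gxE m h s z i₀ φ x - gxE m h s z i₀ φ y - 0 := by rw [sub_zero]
  rw [h0, gx_sub_mem_K_iff m h s z hh hs hz i₀ hi₀ φ x y 0]
  rw [map_zero, add_zero, muexp_zero_right]
  constructor
  · rintro ⟨hxy, -⟩; exact hxy
  · intro hxy
    refine ⟨hxy, ?_⟩
    rw [Uexp]
    have : (∑ i, ((0 : ∀ i, ZMod ((z i * (h - 1) + 1) * s i)) i).val / s i) = 0 := by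
      refine Finset.sum_eq_zero fun i _ => ?_
      rw [Pi.zero_apply, ZMod.val_zero, Nat.zero_div]
    rw [this]
    push_cast
    ring

/-- Every zero of `φ'` is congruent mod `K` to a canonical zero. -/
theorem mk_zero_eq_gx (i₀ : Fin m) (hi₀ : z i₀ = 1)
    (φ : (∀ i, ZMod (s i)) → ZMod h) (g : ∀ i, ZMod ((z i * (h - 1) + 1) * s i))
    (hg : expand m h s z φ g = 0) :
    (QuotientAddGroup.mk g : _ ⧸ Ksub m h s z hh hs hz)
      = QuotientAddGroup.mk (gxE m h s z i₀ φ (resHom m h s z g)) := by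
  rw [mk_eq_mk_iff]
  set l := g - gxE m h s z i₀ φ (resHom m h s z g) with hldef
  have hL : l ∈ Lsub m h s z := by
    rw [mem_Lsub_iff, hldef, map_sub, res_gxE m h s z hh i₀ hi₀, sub_self]
  rw [mem_Ksub_iff m h s z hh hs hz]
  refine ⟨hL, ?_⟩
  have h1 : expand m h s z φ (gxE m h s z i₀ φ (resHom m h s z g) + l)
      = expand m h s z φ (gxE m h s z i₀ φ (resHom m h s z g)) + Uexp m h s z l :=
    expand_add_mem_L m h s z hh hz φ _ l hL
  rw [show gxE m h s z i₀ φ (resHom m h s z g) + l = g by rw [hldef]; abel,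
    hg, expand_gxE m h s z hh hz i₀ hi₀] at h1
  linear_combination -h1

end Quot

section Cards
variable [NeZero h] (hh : 2 ≤ h) (hs : ∀ i, 1 < s i) (hz : ∀ i, z i ≤ 1)

theorem card_N (i₀ : Fin m) (hi₀ : z i₀ = 1) :
    Nat.card ((Lsub m h s z).map (QuotientAddGroup.mk' (Ksub m h s z hh hs hz))) = h := by
  have hcast : ∀ j : ZMod h, ((j.val : ℕ) : ZMod h) = j := fun j => by
    simp [ZMod.natCast_val, ZMod.cast_id]
  set f : ZMod h → ((Lsub m h s z).map (QuotientAddGroup.mk' (Ksub m h s z hh hs hz))) :=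
    fun j => ⟨QuotientAddGroup.mk' (Ksub m h s z hh hs hz) (j.val • u0E m h s z i₀),
      ⟨j.val • u0E m h s z i₀, u0_smul_mem_L m h s z hh i₀ hi₀ j.val, rfl⟩⟩ with hf
  have hbij : Function.Bijective f := by
    constructor
    · intro j j' hjj
      have h1 := Subtype.ext_iff.1 hjj
      rw [hf] at h1
      simp only [QuotientAddGroup.mk'_apply] at h1
      have h2 := (mk_eq_mk_iff m h s z hh hs hz _ _).1 h1
      have h3 := ((mem_Ksub_iff m h s z hh hs hz _).1 h2).2
      rw [Uexp_sub_mem m h s z hh hz _ _ (u0_smul_mem_L m h s z hh i₀ hi₀ j'.val),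
        Uexp_u0_smul m h s z hh i₀ hi₀, Uexp_u0_smul m h s z hh i₀ hi₀,
        hcast, hcast, sub_eq_zero] at h3
      exact h3
    · rintro ⟨nn, l, hl, rfl⟩
      refine ⟨Uexp m h s z l, ?_⟩
      rw [hf]
      refine Subtype.ext ?_
      simp only [QuotientAddGroup.mk'_apply]
      rw [mk_eq_mk_iff m h s z hh hs hz, mem_Ksub_iff m h s z hh hs hz]
      constructor
      · exact (Lsub m h s z).sub_mem
          (u0_smul_mem_L m h s z hh i₀ hi₀ _) hl
      · rw [Uexp_sub_mem m h s z hh hz _ _ hl, Uexp_u0_smul m h s z hh i₀ hi₀, hcast,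
          sub_self]
  have hcc := Nat.card_congr (Equiv.ofBijective f hbij)
  rw [Nat.card_zmod] at hcc
  exact hcc.symm

theorem card_Ebar (i₀ : Fin m) (hi₀ : z i₀ = 1) (q : ℕ) (hsq : ∀ i, s i = q) :
    Nat.card ((∀ i, ZMod ((z i * (h - 1) + 1) * s i)) ⧸ Ksub m h s z hh hs hz)
      = q ^ m * h := by
  have hcast : ∀ j : ZMod h, ((j.val : ℕ) : ZMod h) = j := fun j => by
    simp [ZMod.natCast_val, ZMod.cast_id]
  set f : (∀ i, ZMod (s i)) × ZMod h →
      ((∀ i, ZMod ((z i * (h - 1) + 1) * s i)) ⧸ Ksub m h s z hh hs hz) :=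
    fun p => QuotientAddGroup.mk (upE m h s z p.1 + p.2.val • u0E m h s z i₀) with hf
  have hbij : Function.Bijective f := by
    constructor
    · rintro ⟨x, j⟩ ⟨x', j'⟩ hxy
      rw [hf] at hxy
      have h2 := (mk_eq_mk_iff m h s z hh hs hz _ _).1 hxy
      have hLK := (mem_Ksub_iff m h s z hh hs hz _).1 h2
      have hres := (mem_Lsub_iff m h s z _).1 hLK.1
      rw [map_sub, map_add, map_add, res_upE, res_upE,
        res_u0_smul m h s z hh i₀ hi₀, res_u0_smul m h s z hh i₀ hi₀,
        add_zero, add_zero, sub_eq_zero] at hres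
      subst hres
      have hdiff : upE m h s z x + j.val • u0E m h s z i₀
          - (upE m h s z x + j'.val • u0E m h s z i₀)
          = j.val • u0E m h s z i₀ - j'.val • u0E m h s z i₀ := by abel
      rw [hdiff] at h2
      have h3 := ((mem_Ksub_iff m h s z hh hs hz _).1 h2).2
      rw [Uexp_sub_mem m h s z hh hz _ _ (u0_smul_mem_L m h s z hh i₀ hi₀ j'.val),
        Uexp_u0_smul m h s z hh i₀ hi₀, Uexp_u0_smul m h s z hh i₀ hi₀,
        hcast, hcast, sub_eq_zero] at h3
      rw [h3]
    · intro yq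
      refine QuotientAddGroup.induction_on yq ?_
      intro g
      have hlmem : g - upE m h s z (resHom m h s z g) ∈ Lsub m h s z := by
        rw [mem_Lsub_iff, map_sub, res_upE, sub_self]
      refine ⟨(resHom m h s z g, Uexp m h s z (g - upE m h s z (resHom m h s z g))), ?_⟩
      rw [hf]
      rw [mk_eq_mk_iff m h s z hh hs hz, mem_Ksub_iff m h s z hh hs hz]
      constructor
      · rw [mem_Lsub_iff, map_sub, map_add, res_upE, res_u0_smul m h s z hh i₀ hi₀,
          add_zero, sub_self]
      · have hdiff : upE m h s z (resHom m h s z g)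
            + (Uexp m h s z (g - upE m h s z (resHom m h s z g))).val • u0E m h s z i₀ - g
            = (Uexp m h s z (g - upE m h s z (resHom m h s z g))).val • u0E m h s z i₀
              - (g - upE m h s z (resHom m h s z g)) := by abel
        rw [hdiff, Uexp_sub_mem m h s z hh hz _ _ hlmem,
          Uexp_u0_smul m h s z hh i₀ hi₀, hcast, sub_self]
  have hc1 : Nat.card ((∀ i, ZMod (s i)) × ZMod h) = q ^ m * h := by
    rw [Nat.card_prod, Nat.card_zmod, Nat.card_eq_fintype_card, card_G m s q hsq]
  have hcc := Nat.card_congr (Equiv.ofBijective f hbij)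
  rw [hc1] at hcc
  exact hcc.symm

theorem N_index (i₀ : Fin m) (hi₀ : z i₀ = 1) (q : ℕ) (hsq : ∀ i, s i = q) :
    ((Lsub m h s z).map (QuotientAddGroup.mk' (Ksub m h s z hh hs hz))).index = q ^ m := by
  have hcm := AddSubgroup.card_mul_index
    ((Lsub m h s z).map (QuotientAddGroup.mk' (Ksub m h s z hh hs hz)))
  rw [card_N m h s z hh hs hz i₀ hi₀, card_Ebar m h s z hh hs hz i₀ hi₀ q hsq] at hcm
  have hhpos : 0 < h := by omega
  refine Nat.eq_of_mul_eq_mul_left hhpos ?_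
  calc h * ((Lsub m h s z).map (QuotientAddGroup.mk' (Ksub m h s z hh hs hz))).index
      = q ^ m * h := hcm
    _ = h * q ^ m := by ring

theorem card_R (i₀ : Fin m) (hi₀ : z i₀ = 1) (q : ℕ) (hsq : ∀ i, s i = q)
    (φ : (∀ i, ZMod (s i)) → ZMod h) :
    Nat.card (QuotientAddGroup.mk (s := Ksub m h s z hh hs hz) ''
      {g | expand m h s z φ g = 0}) = q ^ m := by
  set f : (∀ i, ZMod (s i)) →
      (QuotientAddGroup.mk (s := Ksub m h s z hh hs hz) '' {g | expand m h s z φ g = 0}) :=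
    fun x => ⟨QuotientAddGroup.mk (gxE m h s z i₀ φ x),
      ⟨gxE m h s z i₀ φ x, expand_gxE m h s z hh hz i₀ hi₀ φ x, rfl⟩⟩ with hf
  have hbij : Function.Bijective f := by
    constructor
    · intro x x' hxx
      have h1 := Subtype.ext_iff.1 hxx
      rw [hf] at h1
      exact (mk_gx_eq_iff m h s z hh hs hz i₀ hi₀ φ x x').1 h1
    · rintro ⟨r, g, hg, rfl⟩
      refine ⟨resHom m h s z g, Subtype.ext ?_⟩
      exact (mk_zero_eq_gx m h s z hh hs hz i₀ hi₀ φ g hg).symm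
  have := Nat.card_congr (Equiv.ofBijective f hbij)
  rw [Nat.card_eq_fintype_card (α := ∀ i, ZMod (s i)), card_G m s q hsq] at this
  exact this.symm

end Cards

section Final
variable [NeZero h] (hh : 2 ≤ h) (hs : ∀ i, 1 < s i) (hz : ∀ i, z i ≤ 1)

theorem transversal (φ : (∀ i, ZMod (s i)) → ZMod h) :
    ∀ r ∈ (QuotientAddGroup.mk (s := Ksub m h s z hh hs hz) ''
        {g | expand m h s z φ g = 0}),
      ∀ r' ∈ (QuotientAddGroup.mk (s := Ksub m h s z hh hs hz) ''
        {g | expand m h s z φ g = 0}),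
      r - r' ∈ (Lsub m h s z).map (QuotientAddGroup.mk' (Ksub m h s z hh hs hz)) → r = r' := by
  rintro r ⟨g, hg, rfl⟩ r' ⟨g', hg', rfl⟩ hN
  rw [← QuotientAddGroup.mk_sub] at hN
  have hL : g - g' ∈ Lsub m h s z := (mem_N_iff m h s z hh hs hz _).1 hN
  have h1 := expand_add_mem_L m h s z hh hz φ g' (g - g') hL
  rw [show g' + (g - g') = g by abel, hg, hg'] at h1
  have hU : Uexp m h s z (g - g') = 0 := by linear_combination -h1
  exact (mk_eq_mk_iff m h s z hh hs hz _ _).2 ((mem_Ksub_iff m h s z hh hs hz _).2 ⟨hL, hU⟩)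

theorem nonsplit (i₀ : Fin m) (hi₀ : z i₀ = 1) (q : ℕ) (hsq : ∀ i, s i = q)
    (hdvd : h ∣ q) :
    ¬∃ C : AddSubgroup
        ((∀ i, ZMod ((z i * (h - 1) + 1) * s i)) ⧸ Ksub m h s z hh hs hz),
      IsCompl ((Lsub m h s z).map (QuotientAddGroup.mk' (Ksub m h s z hh hs hz))) C := by
  rintro ⟨C, hC⟩
  have hdvds : h ∣ s i₀ := by rw [hsq i₀]; exact hdvd
  set e0 : ∀ i, ZMod ((z i * (h - 1) + 1) * s i) :=
    Pi.single i₀ (((s i₀ / h : ℕ) : ZMod ((z i₀ * (h - 1) + 1) * s i₀))) with he0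
  have hu0e0 : u0E m h s z i₀ = h • e0 := by
    rw [u0E, he0]
    funext i
    by_cases hii : i = i₀
    · subst hii
      rw [Pi.smul_apply, Pi.single_eq_same, Pi.single_eq_same, nsmul_eq_mul,
        ← Nat.cast_mul, Nat.mul_div_cancel' hdvds]
    · rw [Pi.smul_apply, Pi.single_eq_of_ne hii, Pi.single_eq_of_ne hii, smul_zero]
  -- decompose mk e0
  have htop : (QuotientAddGroup.mk e0 : _ ⧸ Ksub m h s z hh hs hz)
      ∈ (Lsub m h s z).map (QuotientAddGroup.mk' (Ksub m h s z hh hs hz)) ⊔ C := by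
    rw [hC.sup_eq_top]; trivial
  obtain ⟨n, hn, c, hc, hsum⟩ := AddSubgroup.mem_sup.1 htop
  -- h • n = 0
  have hhn : h • n = 0 := by
    obtain ⟨l, hl, rfl⟩ := hn
    rw [QuotientAddGroup.mk'_apply, ← QuotientAddGroup.mk_nsmul]
    have hK : h • l ∈ Ksub m h s z hh hs hz := by
      rw [mem_Ksub_iff m h s z hh hs hz]
      refine ⟨(Lsub m h s z).nsmul_mem hl h, ?_⟩
      rw [Uexp_nsmul_mem m h s z hh hz h l hl, nsmul_eq_mul, ZMod.natCast_self, zero_mul]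
    have := (mk_eq_mk_iff m h s z hh hs hz (h • l) 0).2 (by rw [sub_zero]; exact hK)
    rw [this]
    rfl
  -- mk u0 ∈ C
  have hmkuC : (QuotientAddGroup.mk (u0E m h s z i₀) : _ ⧸ Ksub m h s z hh hs hz) ∈ C := by
    have h1 : (QuotientAddGroup.mk (u0E m h s z i₀) : _ ⧸ Ksub m h s z hh hs hz)
        = h • (QuotientAddGroup.mk e0 : _ ⧸ Ksub m h s z hh hs hz) := by
      rw [hu0e0, QuotientAddGroup.mk_nsmul]
    rw [h1, ← hsum, nsmul_add, hhn, zero_add]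
    exact C.nsmul_mem hc h
  have hmkuN : (QuotientAddGroup.mk (u0E m h s z i₀) : _ ⧸ Ksub m h s z hh hs hz)
      ∈ (Lsub m h s z).map (QuotientAddGroup.mk' (Ksub m h s z hh hs hz)) := by
    rw [mem_N_iff m h s z hh hs hz]
    have := u0_smul_mem_L m h s z hh i₀ hi₀ 1
    rwa [one_smul] at this
  have hzero := hC.disjoint.le_bot (⟨hmkuN, hmkuC⟩ :
    (QuotientAddGroup.mk (u0E m h s z i₀) : _ ⧸ Ksub m h s z hh hs hz)
      ∈ (Lsub m h s z).map (QuotientAddGroup.mk' (Ksub m h s z hh hs hz)) ⊓ C)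
  rw [AddSubgroup.mem_bot] at hzero
  have hK : u0E m h s z i₀ ∈ Ksub m h s z hh hs hz := by
    have := (mk_eq_mk_iff m h s z hh hs hz (u0E m h s z i₀) 0).1 (by rw [hzero]; rfl)
    rwa [sub_zero] at this
  have hU := ((mem_Ksub_iff m h s z hh hs hz _).1 hK).2
  have h1u : Uexp m h s z (u0E m h s z i₀) = 1 := by
    have := Uexp_u0_smul m h s z hh i₀ hi₀ 1
    rwa [one_smul, Nat.cast_one] at this
  rw [h1u] at hU
  have hd1 : h ∣ 1 := by
    have := (ZMod.natCast_eq_zero_iff 1 h).1 (by rw [Nat.cast_one]; exact hU)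
    exact this
  have := Nat.le_of_dvd one_pos hd1
  omega

theorem paircount (i₀ : Fin m) (hi₀ : z i₀ = 1) (φ : (∀ i, ZMod (s i)) → ZMod h)
    (w : ∀ i, ZMod ((z i * (h - 1) + 1) * s i)) (hw : w ∉ Lsub m h s z) :
    Nat.card {p : (QuotientAddGroup.mk (s := Ksub m h s z hh hs hz) ''
          {g | expand m h s z φ g = 0}) ×
        (QuotientAddGroup.mk (s := Ksub m h s z hh hs hz) ''
          {g | expand m h s z φ g = 0}) //
        (p.1 : (∀ i, ZMod ((z i * (h - 1) + 1) * s i)) ⧸ Ksub m h s z hh hs hz)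
            - (p.2 : (∀ i, ZMod ((z i * (h - 1) + 1) * s i)) ⧸ Ksub m h s z hh hs hz)
          = QuotientAddGroup.mk w}
      = ncount m h s z φ (resHom m h s z w) (Uexp m h s z w) := by
  set RR := QuotientAddGroup.mk (s := Ksub m h s z hh hs hz) ''
    {g | expand m h s z φ g = 0} with hRR
  set f : {x : ∀ i, ZMod (s i) //
      φ x - φ (x + resHom m h s z w) - muexp m h s z x (resHom m h s z w)
        = Uexp m h s z w} →
      {p : RR × RR //
        (p.1 : (∀ i, ZMod ((z i * (h - 1) + 1) * s i)) ⧸ Ksub m h s z hh hs hz)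
            - (p.2 : (∀ i, ZMod ((z i * (h - 1) + 1) * s i)) ⧸ Ksub m h s z hh hs hz)
          = QuotientAddGroup.mk w} :=
    fun y => ⟨(⟨QuotientAddGroup.mk (gxE m h s z i₀ φ (y.1 + resHom m h s z w)),
        ⟨_, expand_gxE m h s z hh hz i₀ hi₀ φ _, rfl⟩⟩,
      ⟨QuotientAddGroup.mk (gxE m h s z i₀ φ y.1),
        ⟨_, expand_gxE m h s z hh hz i₀ hi₀ φ _, rfl⟩⟩), by
        show (QuotientAddGroup.mk (gxE m h s z i₀ φ (y.1 + resHom m h s z w))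
            : _ ⧸ Ksub m h s z hh hs hz)
          - QuotientAddGroup.mk (gxE m h s z i₀ φ y.1) = QuotientAddGroup.mk w
        rw [← QuotientAddGroup.mk_sub, mk_eq_mk_iff m h s z hh hs hz]
        exact (gx_sub_mem_K_iff m h s z hh hs hz i₀ hi₀ φ _ _ w).2 ⟨rfl, y.2⟩⟩ with hfdef
  have hbij : Function.Bijective f := by
    constructor
    · intro y y' hyy
      have h2 := congrArg (fun t => (t.1.2 : _ ⧸ Ksub m h s z hh hs hz)) hyy
      simp only [hfdef] at h2
      exact Subtype.ext ((mk_gx_eq_iff m h s z hh hs hz i₀ hi₀ φ _ _).1 h2)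
    · rintro ⟨⟨⟨r1, hr1⟩, ⟨r2, hr2⟩⟩, hp⟩
      obtain ⟨g1, hg1, rfl⟩ := hr1
      obtain ⟨g2, hg2, rfl⟩ := hr2
      have he1 := mk_zero_eq_gx m h s z hh hs hz i₀ hi₀ φ g1 hg1
      have he2 := mk_zero_eq_gx m h s z hh hs hz i₀ hi₀ φ g2 hg2
      have hp' : (QuotientAddGroup.mk (gxE m h s z i₀ φ (resHom m h s z g1))
            : _ ⧸ Ksub m h s z hh hs hz)
          - QuotientAddGroup.mk (gxE m h s z i₀ φ (resHom m h s z g2))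
          = QuotientAddGroup.mk w := by
        rw [← he1, ← he2]; exact hp
      rw [← QuotientAddGroup.mk_sub, mk_eq_mk_iff m h s z hh hs hz] at hp'
      obtain ⟨hx12, hF⟩ := (gx_sub_mem_K_iff m h s z hh hs hz i₀ hi₀ φ _ _ w).1 hp'
      refine ⟨⟨resHom m h s z g2, hF⟩, ?_⟩
      refine Subtype.ext (Prod.ext ?_ ?_)
      · show (⟨QuotientAddGroup.mk (gxE m h s z i₀ φ (resHom m h s z g2 + resHom m h s z w)),
            _⟩ : RR) = ⟨QuotientAddGroup.mk g1, _⟩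
        refine Subtype.ext ?_
        show QuotientAddGroup.mk (gxE m h s z i₀ φ (resHom m h s z g2 + resHom m h s z w))
            = QuotientAddGroup.mk g1
        rw [← hx12, he1]
      · refine Subtype.ext ?_
        show QuotientAddGroup.mk (gxE m h s z i₀ φ (resHom m h s z g2))
            = QuotientAddGroup.mk g2
        rw [he2]
  have hcc := Nat.card_congr (Equiv.ofBijective f hbij)
  rw [Nat.card_eq_fintype_card, Fintype.card_subtype] at hcc
  rw [← hcc]
  rfl

end Final

theorem part2_iff [NeZero h] (hh : 2 ≤ h) (hs : ∀ i, 1 < s i) (hz : ∀ i, z i ≤ 1)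
    (i₀ : Fin m) (hi₀ : z i₀ = 1) (hp : Nat.Prime h) (q : ℕ)
    (hsq : ∀ i, s i = q) (hdvd : h ∣ q) (φ : (∀ i, ZMod (s i)) → ZMod h) :
    (∀ g, g ∉ LSet m h s z → AC h (expand m h s z φ) g = 0)
      ↔ (IsAddRDS
            ((Lsub m h s z).map (QuotientAddGroup.mk' (Ksub m h s z hh hs hz)))
            (QuotientAddGroup.mk (s := Ksub m h s z hh hs hz) ''
              {g | expand m h s z φ g = 0})
            (q ^ m) h (q ^ m) (q ^ m / h)
          ∧ ¬∃ C : AddSubgroup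
                ((∀ i, ZMod ((z i * (h - 1) + 1) * s i)) ⧸ Ksub m h s z hh hs hz),
              IsCompl
                ((Lsub m h s z).map (QuotientAddGroup.mk' (Ksub m h s z hh hs hz)))
                C) := by
  rw [GPhA_iff_Qsum m h s z hh hz φ]
  constructor
  · intro hQ
    refine ⟨⟨N_index m h s z hh hs hz i₀ hi₀ q hsq, card_N m h s z hh hs hz i₀ hi₀,
      card_R m h s z hh hs hz i₀ hi₀ q hsq φ, transversal m h s z hh hs hz φ, ?_⟩,
      nonsplit m h s z hh hs hz i₀ hi₀ q hsq hdvd⟩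
    intro x
    refine QuotientAddGroup.induction_on x ?_
    intro w hwN
    have hwL : w ∉ Lsub m h s z := fun hmem => hwN ((mem_N_iff m h s z hh hs hz w).2 hmem)
    have hy : resHom m h s z w ≠ 0 := fun h0 => hwL ((mem_Lsub_iff m h s z w).2 h0)
    have hcnt := ((ncount_const_iff m h s z hp q hsq φ (resHom m h s z w)).1
      ((Qsum_zero_iff_ncount m h s z hp φ (resHom m h s z w)).1 (hQ _ hy))) (Uexp m h s z w)
    rw [paircount m h s z hh hs hz i₀ hi₀ φ w hwL]
    exact hcnt
  · rintro ⟨⟨-, -, -, -, hcount⟩, -⟩ y hy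
    rw [Qsum_zero_iff_ncount m h s z hp φ y, ncount_const_iff m h s z hp q hsq φ y]
    intro u
    set w := upE m h s z y + u.val • u0E m h s z i₀ with hwdef
    have hres : resHom m h s z w = y := by
      rw [hwdef, map_add, res_upE, res_u0_smul m h s z hh i₀ hi₀, add_zero]
    have hUw : Uexp m h s z w = u := by
      rw [hwdef, Uexp_add_mem m h s z hh hz _ _ (u0_smul_mem_L m h s z hh i₀ hi₀ u.val),
        Uexp_upE, Uexp_u0_smul m h s z hh i₀ hi₀, zero_add]
      simp [ZMod.natCast_val, ZMod.cast_id]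
    have hwL : w ∉ Lsub m h s z := fun hmem => hy (by
      rw [← hres]; exact (mem_Lsub_iff m h s z w).1 hmem)
    have hxN : (QuotientAddGroup.mk w : _ ⧸ Ksub m h s z hh hs hz)
        ∉ (Lsub m h s z).map (QuotientAddGroup.mk' (Ksub m h s z hh hs hz)) :=
      fun hmem => hwL ((mem_N_iff m h s z hh hs hz w).1 hmem)
    have hcnt := hcount (QuotientAddGroup.mk w) hxN
    rw [paircount m h s z hh hs hz i₀ hi₀ φ w hwL, hres, hUw] at hcnt
    exact hcnt

end StructPart


/-- let `h` be a prime divisor of `q`, let `φ : ℤ_q^m → ℤ_h` be a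
normalized array with expansion `φ'` of type `z ≠ 0`, and let `E, K, L` be the
associated groups (here `s = (q,…,q)`).  The following are equivalent:
(i) the cocycle `μ_z·∂φ` is symmetric and orthogonal, i.e. `M_{μ_z·∂φ}` is a
symmetric Butson Hadamard matrix in `BH(q^m, h)`;
(ii) `φ` is a `GPhA(q^m)` of type `z`;
(iii) `{g + K ∈ E/K : φ'(g) = 0}` is a non-splitting `(q^m, h, q^m, q^m/h)`-relative
difference set in `E/K` with forbidden subgroup `L/K`. -/
theorem symm_orthogonal_iff_GPhA_iff_nonsplitting_RDS
    (q m h : ℕ) (s z : Fin m → ℕ) (hsq : ∀ i, s i = q)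
    [∀ i, NeZero ((z i * (h - 1) + 1) * s i)] [∀ i, NeZero (s i)]
    (hh : 2 ≤ h) (hs : ∀ i, 1 < s i) (hz : ∀ i, z i ≤ 1)
    (hp : Nat.Prime h) (hdvd : h ∣ q) (hz0 : ∃ i, z i = 1)
    (φ : (∀ i, ZMod (s i)) → ZMod h) (hφ0 : φ 0 = 0) :
    (((∀ a b, psiexp m h s z φ a b = psiexp m h s z φ b a)
        ∧ IsBH (q ^ m) h
            (Matrix.of fun a b : ∀ i, ZMod (s i) =>
              zeta h ^ (psiexp m h s z φ a b).val))
      ↔ (∀ g, g ∉ LSet m h s z → AC h (expand m h s z φ) g = 0))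
    ∧ ((∀ g, g ∉ LSet m h s z → AC h (expand m h s z φ) g = 0)
      ↔ (IsAddRDS
            ((Lsub m h s z).map (QuotientAddGroup.mk' (Ksub m h s z hh hs hz)))
            (QuotientAddGroup.mk (s := Ksub m h s z hh hs hz) ''
              {g | expand m h s z φ g = 0})
            (q ^ m) h (q ^ m) (q ^ m / h)
          ∧ ¬∃ C : AddSubgroup
                ((∀ i, ZMod ((z i * (h - 1) + 1) * s i)) ⧸ Ksub m h s z hh hs hz),
              IsCompl
                ((Lsub m h s z).map (QuotientAddGroup.mk' (Ksub m h s z hh hs hz)))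
                C)) := by
  haveI : NeZero h := ⟨by omega⟩
  obtain ⟨i₀, hi₀⟩ := hz0
  exact ⟨part1_iff m h s z q hsq hh hz φ hφ0,
    part2_iff m h s z hh hs hz i₀ hi₀ hp q hsq hdvd φ⟩
end

section
/- For every integer k ≥ 3 there exists a normalized map χ: ℤ_2^k → ℤ_2 such that the cocycle μ_1·∂χ ∈ Z²(ℤ_2^k, ⟨−1⟩) is symmetric and orthogonal with nontrivial coboundary ∂χ; in particular, χ is a GP2A(2^k) of type 1 = (1,…,1), and consequently the expansion χ': ℤ_4^k → ℤ_2 of χ of type 1 is a generalized partially bent function. -/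
open scoped BigOperators

noncomputable section

/-- The cocycle `μ_1 ∈ Z²(ℤ_2^k, ⟨-1⟩)` in exponent form:
`μ_1(x,y) = Π_i (-1)^{⌊(x_i+y_i)/2⌋}`. -/
def muOne (k : ℕ) (x y : Fin k → ZMod 2) : ZMod 2 :=
  ((∑ i, ((x i).val + (y i).val) / 2 : ℕ) : ZMod 2)

/-- The expansion `χ' : ℤ_4^k → ℤ_2` of type `1 = (1,…,1)` of `χ : ℤ_2^k → ℤ_2`:
`χ'(g) = χ(g mod 2) + Σ_i ⌊g_i/2⌋ (mod 2)`. -/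
def expandOne (k : ℕ) (χ : (Fin k → ZMod 2) → ZMod 2)
    (g : Fin k → ZMod 4) : ZMod 2 :=
  χ (fun i => ((g i).val : ZMod 2)) + ((∑ i, (g i).val / 2 : ℕ) : ZMod 2)

/-- `L = {g ∈ ℤ_4^k : every g_i ∈ {0,2}}`. -/
def LOne (k : ℕ) : Set (Fin k → ZMod 4) :=
  {g | ∀ i, 2 ∣ (g i).val}

namespace GPBAaux

variable {k : ℕ}

lemma zeta_two : zeta 2 = -1 := by
  have h : (2 * (Real.pi:ℂ) * Complex.I / ((2:ℕ):ℂ)) = Real.pi * Complex.I := by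
    push_cast; ring
  rw [zeta, h, Complex.exp_pi_mul_I]

lemma zmod2_cases : ∀ u : ZMod 2, u = 0 ∨ u = 1 := by decide

lemma pow_val_add (u v : ZMod 2) : ((-1:ℂ))^((u + v).val) = (-1)^u.val * (-1)^v.val := by
  rcases zmod2_cases u with hu|hu <;> rcases zmod2_cases v with hv|hv <;>
    subst hu <;> subst hv <;>
    norm_num [show ZMod.val (2 : ZMod 2) = 0 from rfl, show ZMod.val (1 : ZMod 2) = 1 from rfl]

lemma pow_val_one_add (u : ZMod 2) : ((-1:ℂ))^((u + 1).val) = -(-1)^u.val := by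
  rcases zmod2_cases u with hu|hu <;> subst hu <;>
    norm_num [show ZMod.val (2 : ZMod 2) = 0 from rfl, show ZMod.val (1 : ZMod 2) = 1 from rfl]

lemma sum_sign_zero {G : Type*} [AddCommGroup G] [Fintype G] (X : G → ZMod 2) (b₀ : G)
    (h : ∀ x, X (x + b₀) = X x + 1) : ∑ b : G, ((-1:ℂ))^(X b).val = 0 := by
  have key : ∑ b : G, ((-1:ℂ))^(X (b + b₀)).val = ∑ b : G, ((-1:ℂ))^(X b).val :=
    Fintype.sum_bijective (· + b₀) (Equiv.addRight b₀).bijective _ _ (fun b => rfl)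
  have key2 : ∑ b : G, ((-1:ℂ))^(X (b + b₀)).val = -∑ b : G, ((-1:ℂ))^(X b).val := by
    rw [← Finset.sum_neg_distrib]
    exact Finset.sum_congr rfl fun b _ => by rw [h b, pow_val_one_add]
  have h := key.symm.trans key2
  have hS : (∑ b : G, ((-1:ℂ))^(X b).val) + (∑ b : G, ((-1:ℂ))^(X b).val) = 0 := by
    linear_combination h
  exact add_self_eq_zero.mp hS

def dotP (x y : Fin k → ZMod 2) : ZMod 2 := ∑ i, x i * y i

def chi3 (i0 i1 i2 : Fin k) (x : Fin k → ZMod 2) : ZMod 2 := x i0 * x i1 + x i1 * x i2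

def Lf (i0 i1 i2 : Fin k) (w b : Fin k → ZMod 2) : ZMod 2 :=
  dotP w b + w i0 * b i1 + w i1 * b i0 + w i1 * b i2 + w i2 * b i1

lemma dotP_comm (x y : Fin k → ZMod 2) : dotP x y = dotP y x :=
  Finset.sum_congr rfl fun i _ => mul_comm _ _

lemma dotP_add_left (x y z : Fin k → ZMod 2) : dotP (x + y) z = dotP x z + dotP y z := by
  simp [dotP, Pi.add_apply, add_mul, Finset.sum_add_distrib]

lemma dotP_zero_right (x : Fin k → ZMod 2) : dotP x 0 = 0 := by simp [dotP]

lemma chi3_add (i0 i1 i2 : Fin k) (x y : Fin k → ZMod 2) :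
    chi3 i0 i1 i2 (x + y) = chi3 i0 i1 i2 x + chi3 i0 i1 i2 y
      + (x i0 * y i1 + y i0 * x i1 + x i1 * y i2 + y i1 * x i2) := by
  simp only [chi3, Pi.add_apply]; ring

lemma Lf_add_right (i0 i1 i2 : Fin k) (w x y : Fin k → ZMod 2) :
    Lf i0 i1 i2 w (x + y) = Lf i0 i1 i2 w x + Lf i0 i1 i2 w y := by
  simp only [Lf, dotP, Pi.add_apply, mul_add, Finset.sum_add_distrib]; ring

lemma halfcast (u v : ZMod 2) : (((u.val + v.val)/2 : ℕ) : ZMod 2) = u * v := by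
  revert u v; decide

lemma muOne_eq (x y : Fin k → ZMod 2) : muOne k x y = dotP x y := by
  rw [muOne, Nat.cast_sum]
  exact Finset.sum_congr rfl fun i _ => halfcast _ _

lemma dotP_single (w : Fin k → ZMod 2) (j : Fin k) : dotP w (Pi.single j 1) = w j := by
  simp [dotP, Pi.single_apply, mul_ite, Finset.sum_ite_eq]

lemma two_eq_zero : (2 : ZMod 2) = 0 := by decide

lemma zmod2_ne_one {u : ZMod 2} (h : u ≠ 1) : u = 0 := by revert u; decide

lemma Lf_exists_one (i0 i1 i2 : Fin k) (h01 : i0 ≠ i1) (h02 : i0 ≠ i2) (h12 : i1 ≠ i2)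
    (w : Fin k → ZMod 2) (hw : w ≠ 0) : ∃ b, Lf i0 i1 i2 w b = 1 := by
  by_contra hfalse
  push_neg at hfalse
  have hz : ∀ b, Lf i0 i1 i2 w b = 0 := fun b => zmod2_ne_one (hfalse b)
  have e0 : w i0 + w i1 = 0 := by
    have := hz (Pi.single i0 1)
    simpa [Lf, dotP_single, Pi.single_eq_same,
      Pi.single_eq_of_ne h01.symm, Pi.single_eq_of_ne h02.symm] using this
  have e1 : w i1 + w i0 + w i2 = 0 := by
    have := hz (Pi.single i1 1)
    simpa [Lf, dotP_single, Pi.single_eq_same,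
      Pi.single_eq_of_ne h01, Pi.single_eq_of_ne h12.symm] using this
  have e2 : w i2 + w i1 = 0 := by
    have := hz (Pi.single i2 1)
    simpa [Lf, dotP_single, Pi.single_eq_same,
      Pi.single_eq_of_ne h02, Pi.single_eq_of_ne h12] using this
  have hw1 : w i1 = 0 := by
    linear_combination e0 + e1 + e2 - (w i0 + w i1 + w i2) * two_eq_zero
  have hw0 : w i0 = 0 := by linear_combination e0 - hw1
  have hw2 : w i2 = 0 := by linear_combination e2 - hw1
  apply hw
  funext j
  by_cases hj0 : j = i0
  · rw [hj0, hw0]; rfl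
  by_cases hj1 : j = i1
  · rw [hj1, hw1]; rfl
  by_cases hj2 : j = i2
  · rw [hj2, hw2]; rfl
  have := hz (Pi.single j 1)
  simpa [Lf, dotP_single, Pi.single_eq_of_ne (Ne.symm hj0), Pi.single_eq_of_ne (Ne.symm hj1),
    Pi.single_eq_of_ne (Ne.symm hj2)] using this

lemma shift_id (i0 i1 i2 : Fin k) (a b₀ : Fin k → ZMod 2) (B : ZMod 2)
    (h : Lf i0 i1 i2 a b₀ = 1) (ε : Fin k → ZMod 2) :
    chi3 i0 i1 i2 (ε + b₀) - chi3 i0 i1 i2 (ε + b₀ + a) - B - dotP (ε + b₀) a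
      = (chi3 i0 i1 i2 ε - chi3 i0 i1 i2 (ε + a) - B - dotP ε a) + 1 := by
  rw [Lf, show dotP a b₀ = dotP b₀ a from dotP_comm _ _] at h
  simp only [chi3_add, dotP_add_left, Pi.add_apply]
  linear_combination -h - two_eq_zero

lemma P3a : ∀ ε δ : ZMod 2, ((((ε.val + 2*δ.val : ℕ) : ZMod 4)).val : ZMod 2) = ε := by decide
lemma P3b : ∀ ε δ : ZMod 2, (((ε.val + 2*δ.val : ℕ) : ZMod 4)).val / 2 = δ.val := by decide
lemma P1 : ∀ (ε δ : ZMod 2) (u : ZMod 4),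
    (((((ε.val + 2*δ.val : ℕ) : ZMod 4) + u)).val : ZMod 2) = ε + (u.val : ZMod 2) := by decide
lemma P2 : ∀ (ε δ : ZMod 2) (u : ZMod 4),
    ((((((ε.val + 2*δ.val : ℕ) : ZMod 4) + u)).val / 2 : ℕ) : ZMod 2)
      = δ + ((u.val / 2 : ℕ) : ZMod 2) + ε * ((u.val : ℕ) : ZMod 2) := by decide
lemma Pinj : ∀ ε δ ε' δ' : ZMod 2,
    (((ε.val + 2*δ.val : ℕ)) : ZMod 4) = ((ε'.val + 2*δ'.val : ℕ) : ZMod 4) →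
      ε = ε' ∧ δ = δ' := by decide
lemma val_cast : ∀ u : ZMod 2, ((u.val : ℕ) : ZMod 2) = u := by decide

def gmod (g : Fin k → ZMod 4) : Fin k → ZMod 2 := fun i => ((g i).val : ZMod 2)
def gdiv (g : Fin k → ZMod 4) : ZMod 2 := ((∑ i, (g i).val / 2 : ℕ) : ZMod 2)
def phi (p : (Fin k → ZMod 2) × (Fin k → ZMod 2)) : Fin k → ZMod 4 :=
  fun i => (((p.1 i).val + 2*((p.2 i).val) : ℕ) : ZMod 4)

lemma card_fun2 : Fintype.card (Fin k → ZMod 2) = 2^k := by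
  simp [Fintype.card_fun]

lemma phi_bij : Function.Bijective (phi (k := k)) := by
  rw [Fintype.bijective_iff_injective_and_card]
  constructor
  · intro p q h
    have hpt := fun i => congrFun h i
    have hco := fun i => Pinj (p.1 i) (p.2 i) (q.1 i) (q.2 i) (hpt i)
    exact Prod.ext (funext fun i => (hco i).1) (funext fun i => (hco i).2)
  · rw [Fintype.card_prod, card_fun2]
    simp [Fintype.card_fun, ← Nat.mul_pow]

lemma expand_phi (χ : (Fin k → ZMod 2) → ZMod 2) (ε δ : Fin k → ZMod 2) :
    expandOne k χ (phi (ε, δ)) = χ ε + ∑ i, δ i := by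
  rw [expandOne]
  congr 1
  · congr 1; funext i; exact P3a (ε i) (δ i)
  · rw [show (∑ i, (phi (ε,δ) i).val / 2) = ∑ i, (δ i).val from
      Finset.sum_congr rfl (fun i _ => P3b (ε i) (δ i)), Nat.cast_sum]
    exact Finset.sum_congr rfl fun i _ => val_cast _

lemma expand_phi_add (χ : (Fin k → ZMod 2) → ZMod 2) (ε δ : Fin k → ZMod 2)
    (g : Fin k → ZMod 4) :
    expandOne k χ (phi (ε, δ) + g)
      = χ (ε + gmod g) + ∑ i, (δ i + (((g i).val / 2 : ℕ) : ZMod 2) + ε i * gmod g i) := by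
  rw [expandOne]
  congr 1
  · congr 1; funext i
    exact P1 (ε i) (δ i) (g i)
  · rw [Nat.cast_sum]
    exact Finset.sum_congr rfl fun i _ => P2 (ε i) (δ i) (g i)

lemma exponent_eq (χ : (Fin k → ZMod 2) → ZMod 2) (ε δ : Fin k → ZMod 2)
    (g : Fin k → ZMod 4) :
    expandOne k χ (phi (ε, δ)) - expandOne k χ (phi (ε, δ) + g)
      = χ ε - χ (ε + gmod g) - gdiv g - dotP ε (gmod g) := by
  rw [expand_phi, expand_phi_add, Finset.sum_add_distrib, Finset.sum_add_distrib]
  rw [show (∑ i, (((g i).val / 2 : ℕ) : ZMod 2)) = gdiv g from (Nat.cast_sum _ _).symm]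
  rw [show (∑ i, ε i * gmod g i) = dotP ε (gmod g) from rfl]
  ring

lemma AC_expand (χ : (Fin k → ZMod 2) → ZMod 2) (g : Fin k → ZMod 4) :
    AC 2 (expandOne k χ) g = (2^k : ℂ) *
      ∑ ε : Fin k → ZMod 2,
        (-1:ℂ) ^ ((χ ε - χ (ε + gmod g) - gdiv g - dotP ε (gmod g)).val) := by
  rw [AC]
  have hterm : ∀ p : (Fin k → ZMod 2) × (Fin k → ZMod 2),
      ((-1:ℂ)) ^ ((χ p.1 - χ (p.1 + gmod g) - gdiv g - dotP p.1 (gmod g)).val)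
        = zeta 2 ^ ((expandOne k χ (phi p) - expandOne k χ (phi p + g)).val) := by
    rintro ⟨ε, δ⟩
    rw [zeta_two, exponent_eq]
  rw [← Fintype.sum_bijective phi phi_bij _ _ hterm]
  rw [Fintype.sum_prod_type]
  simp only [Finset.sum_const, Finset.card_univ, card_fun2, nsmul_eq_mul, Nat.cast_pow,
    Nat.cast_ofNat, Finset.mul_sum]

end GPBAaux

/-- for every `k ≥ 3` there is a normalized map `χ : ℤ_2^k → ℤ_2`
such that the cocycle `μ_1·∂χ ∈ Z²(ℤ_2^k, ⟨-1⟩)` is symmetric and orthogonal with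
nontrivial coboundary `∂χ`; in particular `χ` is a `GP2A(2^k)` of type `1`, and
the expansion `χ' : ℤ_4^k → ℤ_2` of `χ` of type `1` is a generalized partially
bent function. -/
theorem exists_GPBA_all_k
    (k : ℕ) (hk : 3 ≤ k) :
    ∃ χ : (Fin k → ZMod 2) → ZMod 2, χ 0 = 0
      ∧ (∀ a b, muOne k a b + (χ (a + b) - χ a - χ b)
          = muOne k b a + (χ (b + a) - χ b - χ a))
      ∧ IsBH (2 ^ k) 2
          (Matrix.of fun a b : Fin k → ZMod 2 =>
            zeta 2 ^ (muOne k a b + (χ (a + b) - χ a - χ b)).val)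
      ∧ (∃ a b, χ (a + b) - χ a - χ b ≠ 0)
      ∧ (∀ g : Fin k → ZMod 4, g ∉ LOne k → AC 2 (expandOne k χ) g = 0)
      ∧ (∀ x : Fin k → ZMod 4,
          ‖AC 2 (expandOne k χ) x‖ = 0
          ∨ ‖AC 2 (expandOne k χ) x‖ = (4 : ℝ) ^ k) := by
  classical
  open GPBAaux in
  set i0 : Fin k := ⟨0, by omega⟩ with hi0
  set i1 : Fin k := ⟨1, by omega⟩ with hi1
  set i2 : Fin k := ⟨2, by omega⟩ with hi2
  have h01 : i0 ≠ i1 := by simp [hi0, hi1, Fin.ext_iff]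
  have h02 : i0 ≠ i2 := by simp [hi0, hi2, Fin.ext_iff]
  have h12 : i1 ≠ i2 := by simp [hi1, hi2, Fin.ext_iff]
  set χ : (Fin k → ZMod 2) → ZMod 2 := GPBAaux.chi3 i0 i1 i2 with hχ
  -- part 5 proved first, reused in part 6
  have h5 : ∀ g : Fin k → ZMod 4, g ∉ LOne k → AC 2 (expandOne k χ) g = 0 := by
    intro g hg
    have ha : GPBAaux.gmod g ≠ 0 := by
      simp only [LOne, Set.mem_setOf_eq, not_forall] at hg
      obtain ⟨i, hi⟩ := hg
      intro h0
      exact hi ((ZMod.natCast_eq_zero_iff _ 2).mp (congrFun h0 i))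
    obtain ⟨b₀, hb₀⟩ := GPBAaux.Lf_exists_one i0 i1 i2 h01 h02 h12 (GPBAaux.gmod g) ha
    rw [GPBAaux.AC_expand]
    rw [GPBAaux.sum_sign_zero
      (fun ε => χ ε - χ (ε + GPBAaux.gmod g) - GPBAaux.gdiv g - GPBAaux.dotP ε (GPBAaux.gmod g))
      b₀ (fun x => GPBAaux.shift_id i0 i1 i2 (GPBAaux.gmod g) b₀ (GPBAaux.gdiv g) hb₀ x),
      mul_zero]
  refine ⟨χ, ?_, ?_, ?_, ?_, h5, ?_⟩
  · simp [hχ, GPBAaux.chi3]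
  · intro a b
    rw [GPBAaux.muOne_eq, GPBAaux.muOne_eq, GPBAaux.dotP_comm a b,
      show b + a = a + b from add_comm b a]
    ring
  · refine ⟨GPBAaux.card_fun2, fun a b => ⟨_, rfl⟩, ?_⟩
    have hpsi : ∀ a c b : Fin k → ZMod 2,
        (muOne k a b + (χ (a + b) - χ a - χ b)) + (muOne k c b + (χ (c + b) - χ c - χ b))
          = GPBAaux.Lf i0 i1 i2 (a + c) b := by
      intro a c b
      rw [GPBAaux.muOne_eq, GPBAaux.muOne_eq, GPBAaux.Lf, GPBAaux.dotP_add_left]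
      simp only [hχ, GPBAaux.chi3_add, Pi.add_apply]
      ring
    ext a c
    rw [Matrix.mul_apply]
    simp only [Matrix.conjTranspose_apply, Matrix.of_apply, GPBAaux.zeta_two, star_pow,
      star_neg, star_one]
    rw [Finset.sum_congr rfl fun b _ => (GPBAaux.pow_val_add _ _).symm]
    rw [Finset.sum_congr rfl fun b _ => by rw [hpsi a c b]]
    by_cases hac : a = c
    · subst hac
      have haa : a + a = 0 := funext fun i => by
        have : ∀ u : ZMod 2, u + u = 0 := by decide
        exact this _
      have hz : ∀ b : Fin k → ZMod 2, GPBAaux.Lf i0 i1 i2 (a + a) b = 0 := by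
        intro b
        rw [haa]
        simp [GPBAaux.Lf, GPBAaux.dotP]
      rw [Finset.sum_congr rfl fun b _ => by rw [hz b]]
      simp [Finset.card_univ, GPBAaux.card_fun2, Matrix.smul_apply, Matrix.one_apply_eq]
    · have hw : a + c ≠ 0 := by
        intro h0
        apply hac
        funext i
        have h1 := congrFun h0 i
        have : ∀ u v : ZMod 2, u + v = 0 → u = v := by decide
        exact this _ _ h1
      obtain ⟨b₀, hb₀⟩ := GPBAaux.Lf_exists_one i0 i1 i2 h01 h02 h12 (a + c) hw
      rw [GPBAaux.sum_sign_zero (GPBAaux.Lf i0 i1 i2 (a + c)) b₀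
        (fun x => by rw [GPBAaux.Lf_add_right, hb₀])]
      simp [Matrix.smul_apply, Matrix.one_apply_ne hac]
  · refine ⟨Pi.single i0 1, Pi.single i1 1, ?_⟩
    have : χ (Pi.single i0 1 + Pi.single i1 1) - χ (Pi.single i0 1) - χ (Pi.single i1 1)
        = 1 := by
      rw [hχ, GPBAaux.chi3_add]
      simp [Pi.single_eq_same, Pi.single_eq_of_ne h01, Pi.single_eq_of_ne h01.symm,
        Pi.single_eq_of_ne h12.symm, Pi.single_eq_of_ne h02.symm, Pi.single_eq_of_ne h02,
        Pi.single_eq_of_ne h12]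
      ring
    rw [this]
    decide
  · intro x
    by_cases hx : x ∈ LOne k
    · right
      have ha0 : GPBAaux.gmod x = 0 :=
        funext fun i => (ZMod.natCast_eq_zero_iff _ 2).mpr (hx i)
      rw [GPBAaux.AC_expand, ha0]
      have hconst : ∀ ε : Fin k → ZMod 2,
          χ ε - χ (ε + 0) - GPBAaux.gdiv x - GPBAaux.dotP ε 0 = - GPBAaux.gdiv x := by
        intro ε; rw [add_zero, GPBAaux.dotP_zero_right]; ring
      rw [Finset.sum_congr rfl fun ε _ => by rw [hconst ε]]
      rw [Finset.sum_const, Finset.card_univ, GPBAaux.card_fun2, nsmul_eq_mul]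
      simp only [norm_mul, norm_pow, norm_neg, norm_one, Complex.norm_natCast,
        Complex.norm_two, one_pow, mul_one]
      push_cast
      rw [← mul_pow]
      norm_num
    · left
      rw [h5 x hx, norm_zero]

end
end
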